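/- arXiv:2502.07249 — 6 statements merged into one kernel-verified Lean document; each statement's English description precedes it below -/
import Mathlib

section
/- Let n ≥ 2 and let 0 < d < n be an even integer. Let U be a nonempty bounded open subset of ℝⁿ. Then there exists a compactly supported smooth function f : ℝⁿ → ℝ that is not identically zero, such that f vanishes on U, and for every d-dimensional affine subspace ξ of ℝⁿ with ξ ∩ U ≠ ∅, the integral of f over ξ with respect to the d-dimensional Hausdorff measure equals 0. -/
open MeasureTheory
open Set Function Filter Topology Module

lemma aux_support_iteratedDeriv (H : ℝ → ℝ) (k : ℕ) :
    support (iteratedDeriv k H) ⊆ tsupport H := by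
  induction k with
  | zero => simpa [iteratedDeriv_zero] using subset_tsupport H
  | succ k ih =>
    rw [iteratedDeriv_succ]
    refine (support_deriv_subset).trans ?_
    exact closure_minimal ih (isClosed_tsupport H)

lemma aux_contDiff_iteratedDeriv {H : ℝ → ℝ} (hH : ContDiff ℝ (⊤ : ℕ∞) H) (k : ℕ) :
    ContDiff ℝ (⊤ : ℕ∞) (iteratedDeriv k H) := by
  rw [iteratedDeriv_eq_iterate]
  exact hH.iterate_deriv k

lemma aux_zero_of_iteratedDeriv_zero :
    ∀ (k : ℕ) (F : ℝ → ℝ), ContDiff ℝ (⊤ : ℕ∞) F → HasCompactSupport F →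
      iteratedDeriv k F = 0 → F = 0 := by
  intro k
  induction k with
  | zero => intro F _ _ h; simpa [iteratedDeriv_zero] using h
  | succ k ih =>
    intro F hF hsupp h
    rw [iteratedDeriv_succ'] at h
    have hd : deriv F = 0 :=
      ih (deriv F) ((contDiff_infty_iff_deriv.mp (by exact_mod_cast hF)).2) hsupp.deriv h
    have hconst : ∀ x y : ℝ, F x = F y := fun x y =>
      is_const_of_deriv_eq_zero (hF.differentiable (by simp)) (fun t => by simp [hd]) x y
    obtain ⟨y, hy⟩ : ∃ y, y ∉ tsupport F := by
      by_contra hcon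
      push_neg at hcon
      have : tsupport F = univ := eq_univ_of_forall hcon
      exact (IsCompact.ne_univ hsupp) this
    funext x
    simp [hconst x y, image_eq_zero_of_notMem_tsupport hy]

noncomputable def phiAux (H : ℝ → ℝ) (c : ℝ) : ℕ → ℝ → ℝ
  | 0 => fun r => H (r ^ 2 + c)
  | (k+1) => fun r =>
      r ^ (2*(k+1)) * iteratedDeriv (k+1) H (r ^ 2 + c) - (k+1) * phiAux H c k r

lemma phiAux_hasDerivAt {H : ℝ → ℝ} (hH : ContDiff ℝ (⊤ : ℕ∞) H) (c : ℝ) (k : ℕ) (r : ℝ) :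
    HasDerivAt (phiAux H c k) (2 * r ^ (2*k+1) * iteratedDeriv (k+1) H (r ^ 2 + c)) r := by
  induction k generalizing r with
  | zero =>
    have hin : HasDerivAt (fun r : ℝ => r ^ 2 + c) (2 * r) r := by
      simpa using (hasDerivAt_pow 2 r).add_const c
    have hout : HasDerivAt H (deriv H (r ^ 2 + c)) (r ^ 2 + c) :=
      (hH.differentiable (by simp) _).hasDerivAt
    have := hout.comp r hin
    simp only [phiAux]
    refine this.congr_deriv ?_
    simp [iteratedDeriv_one]
    ring
  | succ k ih =>
    have h1 : HasDerivAt (fun r : ℝ => r ^ (2*(k+1)))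
        ((2*(k+1) : ℕ) * r ^ (2*(k+1) - 1)) r := hasDerivAt_pow _ r
    have hin : HasDerivAt (fun r : ℝ => r ^ 2 + c) (2 * r) r := by
      simpa using (hasDerivAt_pow 2 r).add_const c
    have hsm : ContDiff ℝ (⊤ : ℕ∞) (iteratedDeriv (k+1) H) := aux_contDiff_iteratedDeriv hH _
    have hout : HasDerivAt (iteratedDeriv (k+1) H)
        (iteratedDeriv (k+2) H (r ^ 2 + c)) (r ^ 2 + c) := by
      have := (hsm.differentiable (by simp) _).hasDerivAt
        (x := r ^ 2 + c)
      rwa [show deriv (iteratedDeriv (k+1) H) = iteratedDeriv (k+2) H from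
        (iteratedDeriv_succ (n := k+1)).symm] at this
    have h2 : HasDerivAt (fun r : ℝ => iteratedDeriv (k+1) H (r ^ 2 + c))
        (iteratedDeriv (k+2) H (r ^ 2 + c) * (2 * r)) r := by have := hout.comp r hin; exact this
    have h3 := (h1.mul h2).sub ((ih r).const_mul ((k+1 : ℕ) : ℝ))
    simp only [phiAux]
    have e1 : 2*(k+1) - 1 = 2*k+1 := by omega
    rw [e1] at h3
    convert h3 using 1
    · rfl
    · rfl
    · funext x; simp only [Pi.mul_apply, Pi.sub_apply]; push_cast; ring_nf
    · rw [show (2*(k+1)+1) = (2*k+1) + 2 by omega, show k+1+1 = k+2 from rfl]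
      push_cast
      ring

lemma phiAux_zero_eval (H : ℝ → ℝ) (c : ℝ) (k : ℕ) :
    phiAux H c k 0 = (-1)^k * (k.factorial : ℝ) * H c := by
  induction k with
  | zero => simp [phiAux]
  | succ k ih =>
    simp only [phiAux, ih, Nat.factorial_succ]
    rw [zero_pow (by omega)]
    push_cast
    ring

lemma phiAux_eventually_zero {H : ℝ → ℝ} (hs : HasCompactSupport H) (c : ℝ) (k : ℕ) :
    ∀ᶠ r in atTop, phiAux H c k r = 0 := by
  obtain ⟨R, hR⟩ : ∃ R : ℝ, tsupport H ⊆ Metric.closedBall 0 R :=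
    hs.isBounded.subset_closedBall 0
  have key : ∀ r : ℝ, max 1 (R + |c| + 1) ≤ r → ∀ j, iteratedDeriv j H (r ^ 2 + c) = 0 := by
    intro r hr j
    have h1 : (1:ℝ) ≤ r := le_trans (le_max_left _ _) hr
    have h2 : R + |c| + 1 ≤ r := le_trans (le_max_right _ _) hr
    have hrr : R < r ^ 2 + c := by nlinarith [abs_nonneg c, neg_abs_le c, le_abs_self c]
    by_contra hne
    have hmem := aux_support_iteratedDeriv H j (mem_support.mpr hne)
    have := hR hmem
    rw [Metric.mem_closedBall, Real.dist_eq, sub_zero] at this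
    have := le_abs_self (r ^ 2 + c)
    linarith [abs_nonneg c]
  filter_upwards [eventually_ge_atTop (max 1 (R + |c| + 1))] with r hr
  induction k with
  | zero =>
    have h0 := key r hr 0
    rw [iteratedDeriv_zero] at h0
    simp [phiAux, h0]
  | succ k ih => simp [phiAux, key r hr (k+1), ih]

lemma aux_oneD_integral_zero {H : ℝ → ℝ} (hH : ContDiff ℝ (⊤ : ℕ∞) H)
    (hs : HasCompactSupport H) (m : ℕ) (c : ℝ) (hc : H c = 0) :
    ∫ r in Ioi (0:ℝ), r ^ (2*m+1) * iteratedDeriv (m+1) H (r ^ 2 + c) = 0 := by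
  set g := iteratedDeriv (m+1) H with hg
  set F' : ℝ → ℝ := fun r => 2 * r ^ (2*m+1) * g (r ^ 2 + c) with hF'
  obtain ⟨R, hR⟩ : ∃ R : ℝ, tsupport H ⊆ Metric.closedBall 0 R :=
    hs.isBounded.subset_closedBall 0
  have hF'cont : Continuous F' := by
    have := (aux_contDiff_iteratedDeriv hH (m+1)).continuous
    fun_prop
  have hF'supp : HasCompactSupport F' := by
    apply HasCompactSupport.intro (K := Metric.closedBall 0 (max 1 (R + |c| + 1)))
      (isCompact_closedBall _ _)
    intro r hr
    rw [Metric.mem_closedBall, Real.dist_eq, sub_zero, not_le] at hr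
    have h1 : (1:ℝ) < |r| := lt_of_le_of_lt (le_max_left _ _) hr
    have h2 : R + |c| + 1 < |r| := lt_of_le_of_lt (le_max_right _ _) hr
    have hrr : R < r ^ 2 + c := by
      have : |r|^2 = r^2 := sq_abs r
      nlinarith [abs_nonneg c, neg_abs_le c]
    have hgz : g (r ^ 2 + c) = 0 := by
      by_contra hne
      have := hR (aux_support_iteratedDeriv H (m+1) (mem_support.mpr hne))
      rw [Metric.mem_closedBall, Real.dist_eq, sub_zero] at this
      have := le_abs_self (r ^ 2 + c)
      linarith
    simp [hF', hgz]
  have hint : IntegrableOn F' (Ioi (0:ℝ)) :=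
    (hF'cont.integrable_of_hasCompactSupport hF'supp).integrableOn
  have hderiv : ∀ x ∈ Ioi (0:ℝ), HasDerivAt (phiAux H c m) (F' x) x := fun x _ =>
    phiAux_hasDerivAt hH c m x
  have hcont : ContinuousWithinAt (phiAux H c m) (Ici (0:ℝ)) 0 :=
    (phiAux_hasDerivAt hH c m 0).continuousAt.continuousWithinAt
  have htend : Tendsto (phiAux H c m) atTop (𝓝 0) :=
    Tendsto.congr' (EventuallyEq.symm (phiAux_eventually_zero hs c m)) tendsto_const_nhds
  have key := integral_Ioi_of_hasDerivAt_of_tendsto hcont hderiv hint htend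
  rw [phiAux_zero_eval, hc] at key
  simp only [mul_zero, zero_sub, neg_zero] at key
  have hfe : (fun r : ℝ => 2 * (r ^ (2*m+1) * g (r ^ 2 + c))) = F' := by
    funext r; simp only [hF']; ring
  have key2 : (2:ℝ) * ∫ r in Ioi (0:ℝ), r ^ (2*m+1) * g (r ^ 2 + c) = 0 := by
    rw [← integral_const_mul, hfe, key]
  linarith

lemma aux_euclid_integral_zero (d m : ℕ) (hd : d = 2*m+2) {H : ℝ → ℝ}
    (hH : ContDiff ℝ (⊤ : ℕ∞) H) (hs : HasCompactSupport H) (c : ℝ) (hc : H c = 0) :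
    ∫ z : EuclideanSpace ℝ (Fin d), iteratedDeriv (m+1) H (‖z‖ ^ 2 + c) ∂ μH[(d : ℝ)] = 0 := by
  set E := EuclideanSpace ℝ (Fin d)
  have hd0 : 0 < d := by omega
  haveI : Nontrivial E := by
    refine ⟨0, EuclideanSpace.single ⟨0, hd0⟩ 1, ?_⟩
    intro h
    have := congrArg (fun v : E => v ⟨0, hd0⟩) h.symm
    rw [EuclideanSpace.single_apply] at this
    simp only [if_pos rfl] at this
    exact one_ne_zero (this.trans rfl)
  have hfr : finrank ℝ E = d := finrank_euclideanSpace_fin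
  haveI : (μH[(d : ℝ)] : Measure E).IsAddHaarMeasure := by
    have : ((d:ℕ) : ℝ) = ((finrank ℝ E : ℕ) : ℝ) := by rw [hfr]
    rw [this]
    infer_instance
  have key := integral_fun_norm_addHaar (μH[(d : ℝ)] : Measure E)
    (fun y => iteratedDeriv (m+1) H (y ^ 2 + c))
  rw [key, hfr]
  have h1 : ∫ y in Ioi (0:ℝ), y ^ (d - 1) • iteratedDeriv (m+1) H (y ^ 2 + c) = 0 := by
    have := aux_oneD_integral_zero hH hs m c hc
    rw [show d - 1 = 2*m+1 by omega]
    simpa [smul_eq_mul] using this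
  rw [h1]
  simp


set_option maxHeartbeats 1000000 in
/-- **Lack of UCP for the `d`-plane transform, `d` even.**
If `0 < d < n` with `d` even and `U ⊆ ℝⁿ` is a nonempty bounded open set, then there is a
nonzero compactly supported smooth function `f` vanishing on `U` whose integral over every
`d`-dimensional affine subspace meeting `U` (w.r.t. `d`-dimensional Hausdorff measure) is `0`. -/
theorem lack_of_ucp_dplane_transform_even
    (n d : ℕ) (hn : 2 ≤ n) (hd0 : 0 < d) (hdn : d < n) (hdeven : Even d)
    (U : Set (EuclideanSpace ℝ (Fin n))) (hUne : U.Nonempty)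
    (hUbd : Bornology.IsBounded U) (hUopen : IsOpen U) :
    ∃ f : EuclideanSpace ℝ (Fin n) → ℝ,
      ContDiff ℝ (⊤ : ℕ∞) f ∧ HasCompactSupport f ∧ f ≠ 0 ∧
      (∀ x ∈ U, f x = 0) ∧
      ∀ ξ : AffineSubspace ℝ (EuclideanSpace ℝ (Fin n)),
        Module.finrank ℝ ξ.direction = d →
        ((ξ : Set (EuclideanSpace ℝ (Fin n))) ∩ U).Nonempty →
        ∫ x in (ξ : Set (EuclideanSpace ℝ (Fin n))), f x ∂ μH[(d : ℝ)] = 0 := by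
  classical
  obtain ⟨p, hp⟩ := hUne
  obtain ⟨r, hr⟩ := (Metric.isBounded_iff_subset_closedBall p).mp hUbd
  set ρ : ℝ := max r 0 + 1 with hρdef
  have hρ : 0 < ρ := by positivity
  have hU' : U ⊆ Metric.ball p ρ := fun x hx =>
    lt_of_le_of_lt (Metric.mem_closedBall.mp (hr hx)) (by simp [hρdef]; linarith [le_max_left r 0])
  set a : ℝ := ρ ^ 2 with hadef
  have ha : 0 < a := by positivity
  set B : ContDiffBump (a + 3 : ℝ) := ⟨1, 2, one_pos, one_lt_two⟩ with hBdef
  set H : ℝ → ℝ := ⇑B with hHdef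
  have Hsm : ContDiff ℝ (⊤ : ℕ∞) H := B.contDiff
  have Hcs : HasCompactSupport H := B.hasCompactSupport
  have Hts : tsupport H = Metric.closedBall (a+3) 2 := B.tsupport_eq
  have Hone : H (a + 3) = 1 := B.one_of_mem_closedBall (by
    simp [hBdef, Metric.mem_closedBall])
  -- m
  obtain ⟨k, hk⟩ := hdeven
  have hk1 : 1 ≤ k := by omega
  obtain ⟨m, hm⟩ : ∃ m, d = 2*m+2 := ⟨k - 1, by omega⟩
  set g : ℝ → ℝ := iteratedDeriv (m+1) H with hgdef
  have gsupp : support g ⊆ Metric.closedBall (a+3) 2 := by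
    rw [← Hts]; exact aux_support_iteratedDeriv H (m+1)
  have gz : ∀ t : ℝ, t < a + 1 → g t = 0 := by
    intro t ht
    by_contra hne
    have := gsupp (mem_support.mpr hne)
    rw [Metric.mem_closedBall, Real.dist_eq] at this
    have := abs_le.mp this
    linarith [this.1]
  have gz' : ∀ t : ℝ, a + 5 < t → g t = 0 := by
    intro t ht
    by_contra hne
    have := gsupp (mem_support.mpr hne)
    rw [Metric.mem_closedBall, Real.dist_eq] at this
    have := abs_le.mp this
    linarith [this.2]
  set f : (EuclideanSpace ℝ (Fin n)) → ℝ := fun x => g (‖x - p‖ ^ 2) with hfdef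
  have hnormsq : ContDiff ℝ (⊤ : ℕ∞) (fun x : (EuclideanSpace ℝ (Fin n)) => ‖x - p‖ ^ 2) := by
    have h1 : ContDiff ℝ (⊤ : ℕ∞) (fun x : (EuclideanSpace ℝ (Fin n)) => x - p) := contDiff_id.sub contDiff_const
    exact (contDiff_norm_sq ℝ).comp h1
  have hfsm : ContDiff ℝ (⊤ : ℕ∞) f :=
    (aux_contDiff_iteratedDeriv Hsm (m+1)).comp hnormsq
  have hfcs : HasCompactSupport f := by
    apply HasCompactSupport.intro (isCompact_closedBall p (a+5))
    intro x hx
    rw [Metric.mem_closedBall, not_le] at hx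
    have h1 : a + 5 < ‖x - p‖ := by rwa [dist_eq_norm] at hx
    have h2 : a + 5 < ‖x - p‖ ^ 2 := by nlinarith
    exact gz' _ h2
  have hfU : ∀ x ∈ U, f x = 0 := by
    intro x hx
    have h1 : ‖x - p‖ < ρ := by rw [← dist_eq_norm]; exact hU' hx
    have h2 : ‖x - p‖ ^ 2 < a := by
      rw [hadef]; exact pow_lt_pow_left₀ h1 (norm_nonneg _) (by norm_num) |>.trans_le le_rfl
    exact gz _ (by linarith)
  have hfne : f ≠ 0 := by
    have hgne : g ≠ 0 := by
      intro h
      have := aux_zero_of_iteratedDeriv_zero (m+1) H Hsm Hcs h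
      rw [this] at Hone
      simpa using Hone
    obtain ⟨u, hu⟩ := Function.ne_iff.mp hgne
    have hu0 : (0:ℝ) ≤ u := by
      have := gsupp (mem_support.mpr (by simpa using hu))
      rw [Metric.mem_closedBall, Real.dist_eq] at this
      have := abs_le.mp this
      linarith [this.1]
    set v : (EuclideanSpace ℝ (Fin n)) := EuclideanSpace.single (⟨0, by omega⟩ : Fin n) (1:ℝ) with hvdef
    have hv : ‖v‖ = 1 := by simp [hvdef]
    intro h
    apply hu
    have hx := congrFun h (p + Real.sqrt u • v)
    simp only [hfdef, Pi.zero_apply] at hx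
    rw [add_sub_cancel_left, norm_smul, hv, mul_one, Real.norm_eq_abs,
      abs_of_nonneg (Real.sqrt_nonneg u), Real.sq_sqrt hu0] at hx
    simpa using hx
  refine ⟨f, hfsm, hfcs, hfne, hfU, ?_⟩
  intro ξ hξd ⟨q, hqξ, hqU⟩
  haveI : Nonempty ξ := ⟨⟨q, hqξ⟩⟩
  set V := ξ.direction with hVdef
  set q₀ : (EuclideanSpace ℝ (Fin n)) := (EuclideanGeometry.orthogonalProjection ξ p : (EuclideanSpace ℝ (Fin n))) with hq₀def
  have hq₀mem : q₀ ∈ ξ := EuclideanGeometry.orthogonalProjection_mem p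
  have hperp : p - q₀ ∈ Vᗮ := by
    have := EuclideanGeometry.vsub_orthogonalProjection_mem_direction_orthogonal ξ p
    simpa [hq₀def, hVdef] using this
  have hperp' : q₀ - p ∈ Vᗮ := by
    have := Submodule.neg_mem _ hperp
    simpa using this
  set c : ℝ := ‖q₀ - p‖ ^ 2 with hcdef
  -- c < a
  have hqmem : q - q₀ ∈ V := by
    have := AffineSubspace.vsub_mem_direction hqξ hq₀mem
    simpa [hVdef] using this
  have hca : c < a + 1 := by
    have hpyth : ‖q - p‖ ^ 2 = ‖q - q₀‖ ^ 2 + 2 * inner ℝ (q - q₀) (q₀ - p) + ‖q₀ - p‖ ^ 2 := by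
      have : q - p = (q - q₀) + (q₀ - p) := by abel
      rw [this, norm_add_sq_real]
    have hinner : inner ℝ (q - q₀) (q₀ - p) = (0:ℝ) :=
      Submodule.inner_right_of_mem_orthogonal hqmem hperp'
    have hqp : ‖q - p‖ < ρ := by rw [← dist_eq_norm]; exact hU' hqU
    have hqp2 : ‖q - p‖ ^ 2 < a := by
      rw [hadef]; exact pow_lt_pow_left₀ hqp (norm_nonneg _) (by norm_num)
    have : c ≤ ‖q - p‖ ^ 2 := by
      rw [hpyth, hinner]; nlinarith [sq_nonneg ‖q - q₀‖]
    linarith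
  have hHc : H c = 0 := by
    by_contra hne
    have hmem : c ∈ Metric.ball (a+3) 2 := by
      rw [← B.support_eq]; exact mem_support.mpr hne
    rw [Metric.mem_ball, Real.dist_eq] at hmem
    have := abs_lt.mp hmem
    linarith [this.1]
  -- build the isometric parametrization
  haveI : FiniteDimensional ℝ V := inferInstance
  have hfrV : finrank ℝ V = d := hξd
  set L : EuclideanSpace ℝ (Fin d) ≃ₗᵢ[ℝ] V :=
    ((stdOrthonormalBasis ℝ V).reindex (finCongr hfrV)).repr.symm with hLdef
  set e : EuclideanSpace ℝ (Fin d) → EuclideanSpace ℝ (Fin n) :=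
    fun z => (L z : EuclideanSpace ℝ (Fin n)) + q₀ with hedef
  have he : Isometry e := by
    apply Isometry.of_dist_eq
    intro z w
    rw [hedef]
    simp only [dist_add_right]
    rw [dist_eq_norm, ← Submodule.coe_sub, Submodule.norm_coe, ← map_sub, L.norm_map,
      ← dist_eq_norm]
  have hrange : range e = (ξ : Set (EuclideanSpace ℝ (Fin n))) := by
    ext x
    constructor
    · rintro ⟨z, rfl⟩
      have hv : ((L z : EuclideanSpace ℝ (Fin n))) ∈ V := (L z).2
      have := AffineSubspace.vadd_mem_of_mem_direction (by exact hv) hq₀mem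
      simpa [hedef] using this
    · intro hx
      have hxv : x - q₀ ∈ V := by
        have := AffineSubspace.vsub_mem_direction hx hq₀mem
        simpa [hVdef] using this
      refine ⟨L.symm ⟨x - q₀, hxv⟩, ?_⟩
      rw [hedef]
      simp only [LinearIsometryEquiv.apply_symm_apply]
      abel
  have hnormcalc : ∀ z : EuclideanSpace ℝ (Fin d), ‖e z - p‖ ^ 2 = ‖z‖ ^ 2 + c := by
    intro z
    have h1 : e z - p = ((L z : EuclideanSpace ℝ (Fin n))) + (q₀ - p) := by
      rw [hedef]; exact add_sub_assoc _ _ _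
    have hinner : inner ℝ ((L z : EuclideanSpace ℝ (Fin n))) (q₀ - p) = (0:ℝ) :=
      Submodule.inner_right_of_mem_orthogonal (L z).2 hperp'
    rw [h1, norm_add_sq_real, hinner, Submodule.norm_coe, L.norm_map]
    ring
  -- transfer the integral
  have hmap : Measure.map e (μH[(d : ℝ)] : Measure (EuclideanSpace ℝ (Fin d)))
      = (μH[(d : ℝ)] : Measure (EuclideanSpace ℝ (Fin n))).restrict (range e) :=
    he.map_hausdorffMeasure (Or.inl (by positivity))
  rw [← hrange]
  have hstep : ∫ x in range e, f x ∂ μH[(d : ℝ)]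
      = ∫ z, f (e z) ∂ (μH[(d : ℝ)] : Measure (EuclideanSpace ℝ (Fin d))) := by
    rw [← hmap]
    exact integral_map he.continuous.aemeasurable hfsm.continuous.aestronglyMeasurable
  rw [hstep]
  have hfe : (fun z : EuclideanSpace ℝ (Fin d) => f (e z))
      = fun z => iteratedDeriv (m+1) H (‖z‖ ^ 2 + c) := by
    funext z
    rw [hfdef]
    simp only []
    rw [hnormcalc z, hgdef]
  rw [hfe]
  exact aux_euclid_integral_zero d m hm Hsm Hcs c hHc
end

section
/- Let n ≥ 3 be an odd integer and let U be a nonempty bounded open subset of ℝⁿ. Then there exists a compactly supported smooth function f : ℝⁿ → ℝ that is not identically zero, such that f vanishes on U, and for every hyperplane ξ = {x ∈ ℝⁿ : ⟨x, θ⟩ = s} (θ a unit vector, s ∈ ℝ) with ξ ∩ U ≠ ∅, the integral of f over ξ with respect to the (n−1)-dimensional Hausdorff measure equals 0. -/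
open MeasureTheory Set Function Metric


lemma tsupport_iteratedDeriv_subset (g : ℝ → ℝ) (k : ℕ) :
    tsupport (iteratedDeriv k g) ⊆ tsupport g := by
  induction k with
  | zero => simp [iteratedDeriv_zero]
  | succ k ih =>
    rw [iteratedDeriv_succ]
    exact (closure_minimal support_deriv_subset (isClosed_tsupport _)).trans ih

lemma contDiff_iteratedDeriv (g : ℝ → ℝ) (hg : ContDiff ℝ (⊤ : ℕ∞) g) (k : ℕ) :
    ContDiff ℝ (⊤ : ℕ∞) (iteratedDeriv k g) := by
  rw [iteratedDeriv_eq_iterate]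
  exact hg.iterate_deriv k

lemma iteratedDeriv_ne_zero (g : ℝ → ℝ) (hg : ContDiff ℝ (⊤ : ℕ∞) g)
    (hcs : HasCompactSupport g) (hne : g ≠ 0) (k : ℕ) : iteratedDeriv k g ≠ 0 := by
  induction k with
  | zero => simpa using hne
  | succ k ih =>
    intro h
    apply ih
    have hdiff : Differentiable ℝ (iteratedDeriv k g) :=
      (contDiff_iteratedDeriv g hg k).differentiable (by simp)
    have hconst : ∀ x y : ℝ, iteratedDeriv k g x = iteratedDeriv k g y := by
      intro x y
      apply is_const_of_deriv_eq_zero hdiff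
      intro z
      have h2 : deriv (iteratedDeriv k g) = iteratedDeriv (k+1) g := (iteratedDeriv_succ).symm
      rw [h2, h]
      rfl
    obtain ⟨M, hM⟩ := hcs.isBounded.subset_closedBall 0
    have hx0 : (M + 1) ∉ tsupport g := by
      intro hmem
      have := hM hmem
      simp only [Metric.mem_closedBall, Real.dist_eq, sub_zero] at this
      have : |M + 1| ≤ M := by simpa using this
      have h1 : M + 1 ≤ |M + 1| := le_abs_self _
      linarith
    have hx0' : (M + 1) ∉ tsupport (iteratedDeriv k g) :=
      fun hmem => hx0 (tsupport_iteratedDeriv_subset g k hmem)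
    have hzero : iteratedDeriv k g (M + 1) = 0 := image_eq_zero_of_notMem_tsupport hx0'
    funext x
    rw [hconst x (M+1), hzero]
    rfl

lemma hcs_comp (ψ : ℝ → ℝ) (hcs : HasCompactSupport ψ) (j p : ℕ) (t : ℝ) :
    HasCompactSupport (fun r : ℝ => r^p * iteratedDeriv j ψ (t^2 + r^2)) := by
  obtain ⟨M, hM⟩ := hcs.isBounded.subset_closedBall 0
  set M' : ℝ := max M 0 with hM'
  have hM'0 : 0 ≤ M' := le_max_right _ _
  apply HasCompactSupport.intro (isCompact_Icc (a := -(M'+1)) (b := M'+1))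
  intro r hr
  have hr' : r < -(M'+1) ∨ M'+1 < r := by
    by_contra hcon
    push_neg at hcon
    exact hr ⟨hcon.1, hcon.2⟩
  have hgt : M' < t^2 + r^2 := by
    rcases hr' with h | h
    · nlinarith [sq_nonneg t]
    · nlinarith [sq_nonneg t]
  have hnot : (t^2 + r^2) ∉ tsupport ψ := by
    intro hmem
    have := hM hmem
    simp only [Metric.mem_closedBall, Real.dist_eq, sub_zero] at this
    have h1 : t^2 + r^2 ≤ |t^2 + r^2| := le_abs_self _
    have h2 : M ≤ M' := le_max_left _ _
    linarith
  have : (t^2 + r^2) ∉ tsupport (iteratedDeriv j ψ) :=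
    fun hmem => hnot (tsupport_iteratedDeriv_subset ψ j hmem)
  rw [image_eq_zero_of_notMem_tsupport this, mul_zero]

lemma integrableF (ψ : ℝ → ℝ) (hψ : ContDiff ℝ (⊤ : ℕ∞) ψ) (hcs : HasCompactSupport ψ)
    (j p : ℕ) (t : ℝ) :
    Integrable (fun r : ℝ => r^p * iteratedDeriv j ψ (t^2 + r^2)) := by
  apply Continuous.integrable_of_hasCompactSupport
  · exact (continuous_pow p).mul
      (((contDiff_iteratedDeriv ψ hψ j).continuous).comp (by fun_prop))
  · exact hcs_comp ψ hcs j p t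

lemma ibp (ψ : ℝ → ℝ) (hψ : ContDiff ℝ (⊤ : ℕ∞) ψ) (hcs : HasCompactSupport ψ)
    (a : ℝ) (hsupp : tsupport ψ ⊆ Ici a) (p j : ℕ) (t : ℝ) (ht : t^2 < a) :
    (p : ℝ) * (∫ r in Ioi (0:ℝ), r^(p-1) * iteratedDeriv j ψ (t^2 + r^2))
      + 2 * (∫ r in Ioi (0:ℝ), r^(p+1) * iteratedDeriv (j+1) ψ (t^2 + r^2)) = 0 := by
  set D : ℕ → ℝ → ℝ := fun i => iteratedDeriv i ψ with hD
  set g : ℝ → ℝ := fun r => r^p * D j (t^2 + r^2) with hg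
  have hDsmooth : ∀ i, ContDiff ℝ (⊤ : ℕ∞) (D i) := fun i => contDiff_iteratedDeriv ψ hψ i
  have hinner : ContDiff ℝ (⊤ : ℕ∞) (fun r : ℝ => t^2 + r^2) := by fun_prop
  have hgsmooth : ContDiff ℝ (⊤ : ℕ∞) g :=
    (contDiff_id.pow p).mul ((hDsmooth j).comp hinner)
  have hgcs : HasCompactSupport g := hcs_comp ψ hcs j p t
  have hd : ∀ r : ℝ, HasDerivAt g
      ((p:ℝ) * r^(p-1) * D j (t^2+r^2) + r^p * (D (j+1) (t^2+r^2) * (2*r^1))) r := by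
    intro r
    have hi : HasDerivAt (fun x : ℝ => t^2 + x^2) ((2:ℕ)*r^1) r :=
      (hasDerivAt_pow 2 r).const_add (t^2)
    have ho : HasDerivAt (D j) (D (j+1) (t^2+r^2)) (t^2+r^2) := by
      have hdiff : DifferentiableAt ℝ (D j) (t^2+r^2) :=
        ((hDsmooth j).differentiable (by simp)).differentiableAt
      have := hdiff.hasDerivAt
      rwa [show deriv (D j) = D (j+1) from (iteratedDeriv_succ).symm] at this
    have hcomp := ho.comp r hi
    have := (hasDerivAt_pow p r).mul hcomp
    convert this using 1
    · rfl
    · rfl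
    · rfl
    · simp only [Function.comp_apply, Nat.cast_ofNat]
  have hderiv : deriv g = fun r =>
      (p:ℝ) * r^(p-1) * D j (t^2+r^2) + r^p * (D (j+1) (t^2+r^2) * (2*r^1)) :=
    funext fun r => (hd r).deriv
  have hftc : ∫ r in Ioi (0:ℝ), deriv g r = - g 0 :=
    HasCompactSupport.integral_Ioi_deriv_eq
      (hgsmooth.of_le (by exact_mod_cast (le_top : (1:ℕ∞) ≤ ⊤))) hgcs 0
  have hg0 : g 0 = 0 := by
    have hnot : (t^2 + (0:ℝ)^2) ∉ tsupport (D j) := by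
      intro hmem
      have := hsupp (tsupport_iteratedDeriv_subset ψ j hmem)
      simp only [mem_Ici] at this
      nlinarith
    simp only [hg]
    rw [image_eq_zero_of_notMem_tsupport hnot, mul_zero]
  rw [hderiv] at hftc
  have hsplit : ∫ r in Ioi (0:ℝ),
      ((p:ℝ) * r^(p-1) * D j (t^2+r^2) + r^p * (D (j+1) (t^2+r^2) * (2*r^1))) =
      (p:ℝ) * (∫ r in Ioi (0:ℝ), r^(p-1) * D j (t^2+r^2))
        + 2 * (∫ r in Ioi (0:ℝ), r^(p+1) * D (j+1) (t^2+r^2)) := by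
    have h1 : Integrable (fun r : ℝ => r^(p-1) * D j (t^2+r^2)) :=
      integrableF ψ hψ hcs j (p-1) t
    have h2 : Integrable (fun r : ℝ => r^(p+1) * D (j+1) (t^2+r^2)) :=
      integrableF ψ hψ hcs (j+1) (p+1) t
    have hcongr : (fun r : ℝ =>
        (p:ℝ) * r^(p-1) * D j (t^2+r^2) + r^p * (D (j+1) (t^2+r^2) * (2*r^1))) =
        (fun r : ℝ => (p:ℝ) * (r^(p-1) * D j (t^2+r^2))
          + 2 * (r^(p+1) * D (j+1) (t^2+r^2))) := by
      funext r
      rw [pow_succ]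
      ring
    rw [hcongr, integral_add ((h1.const_mul _).integrableOn) ((h2.const_mul _).integrableOn),
      integral_const_mul, integral_const_mul]
  rw [hsplit, hg0, neg_zero] at hftc
  exact hftc

lemma key1D (ψ : ℝ → ℝ) (hψ : ContDiff ℝ (⊤:ℕ∞) ψ) (hcs : HasCompactSupport ψ)
    (a : ℝ) (hsupp : tsupport ψ ⊆ Ici a) :
    ∀ (k j : ℕ), k ≤ j → ∀ t : ℝ, t^2 < a →
      ∫ r in Ioi (0:ℝ), r^(2*k+1) * iteratedDeriv (j+1) ψ (t^2 + r^2) = 0 := by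
  intro k
  induction k with
  | zero =>
    intro j _ t ht
    have h := ibp ψ hψ hcs a hsupp 0 j t ht
    simp only [Nat.cast_zero, zero_mul, zero_add] at h
    rw [show 2*0+1 = 0+1 from rfl]
    linarith
  | succ k ih =>
    intro j hkj t ht
    obtain ⟨j', rfl⟩ : ∃ j', j = j'+1 := ⟨j-1, by omega⟩
    have h := ibp ψ hψ hcs a hsupp (2*k+2) (j'+1) t ht
    have h0 := ih j' (by omega) t ht
    rw [show (2*k+2) - 1 = 2*k+1 by omega] at h
    rw [show (2*k+2) + 1 = 2*(k+1)+1 by omega] at h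
    rw [h0, mul_zero, zero_add] at h
    linarith


open MeasureTheory RealInnerProductSpace

/-- **Lack of UCP for the Radon transform in odd dimensions.**
If `n ≥ 3` is odd and `U ⊆ ℝⁿ` is a nonempty bounded open set, then there is a nonzero
compactly supported smooth function `f` vanishing on `U` whose integral over every hyperplane
`{x : ⟪x, θ⟫ = s}` meeting `U` (w.r.t. `(n-1)`-dimensional Hausdorff measure) is `0`. -/
theorem lack_of_ucp_radon_transform_odd_dim
    (n : ℕ) (hn : 3 ≤ n) (hodd : Odd n)
    (U : Set (EuclideanSpace ℝ (Fin n))) (hUne : U.Nonempty)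
    (hUbd : Bornology.IsBounded U) (hUopen : IsOpen U) :
    ∃ f : EuclideanSpace ℝ (Fin n) → ℝ,
      ContDiff ℝ (⊤ : ℕ∞) f ∧ HasCompactSupport f ∧ f ≠ 0 ∧
      (∀ x ∈ U, f x = 0) ∧
      ∀ (θ : EuclideanSpace ℝ (Fin n)) (s : ℝ), ‖θ‖ = 1 →
        ({x : EuclideanSpace ℝ (Fin n) | ⟪x, θ⟫ = s} ∩ U).Nonempty →
        ∫ x in {x : EuclideanSpace ℝ (Fin n) | ⟪x, θ⟫ = s}, f x ∂ μH[(n : ℝ) - 1] = 0 := by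
  classical
  obtain ⟨c, hc⟩ := hUne
  obtain ⟨R, hR0, hRU⟩ := hUbd.subset_closedBall_lt 0 c
  obtain ⟨m, hnm⟩ : ∃ m, n = 2*m+3 := by
    obtain ⟨l, hl⟩ := hodd; exact ⟨l-1, by omega⟩
  let b : ContDiffBump ((R^2+2) : ℝ) := ⟨1/2, 1, by norm_num, by norm_num⟩
  set ψ : ℝ → ℝ := ⇑b with hψdef
  have hψs : ContDiff ℝ (⊤:ℕ∞) ψ := b.contDiff
  have hψcs : HasCompactSupport ψ := b.hasCompactSupport
  have hψsupp : tsupport ψ ⊆ Icc (R^2+1) (R^2+3) := by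
    rw [hψdef, b.tsupport_eq]
    show closedBall (R^2+2) b.rOut ⊆ _
    rw [show b.rOut = 1 from rfl, Real.closedBall_eq_Icc]
    intro x hx
    rw [mem_Icc] at *
    constructor <;> linarith [hx.1, hx.2]
  have hψIci : tsupport ψ ⊆ Ici (R^2+1) := hψsupp.trans Icc_subset_Ici_self
  set φ : ℝ → ℝ := iteratedDeriv (m+1) ψ with hφ
  have hφs : ContDiff ℝ (⊤:ℕ∞) φ := contDiff_iteratedDeriv ψ hψs (m+1)
  have hφsupp : support φ ⊆ Icc (R^2+1) (R^2+3) :=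
    (subset_tsupport _).trans ((tsupport_iteratedDeriv_subset ψ (m+1)).trans hψsupp)
  have hφzero : ∀ u : ℝ, u < R^2+1 → φ u = 0 := by
    intro u hu
    by_contra h
    have := hφsupp (mem_support.mpr h)
    rw [mem_Icc] at this
    linarith
  set f : EuclideanSpace ℝ (Fin n) → ℝ := fun x => φ (‖x - c‖^2) with hf
  have hfsmooth : ContDiff ℝ (⊤:ℕ∞) f :=
    hφs.comp ((contDiff_id.sub contDiff_const).norm_sq (𝕜 := ℝ))
  refine ⟨f, hfsmooth, ?_, ?_, ?_, ?_⟩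
  · -- compact support
    apply HasCompactSupport.intro (isCompact_closedBall c (R+2))
    intro x hx
    have h1 : R + 2 < ‖x - c‖ := by
      rw [mem_closedBall, dist_eq_norm, not_le] at hx
      exact hx
    have h2 : R^2+3 < ‖x-c‖^2 := by nlinarith [norm_nonneg (x - c)]
    have hnot : ‖x-c‖^2 ∉ support φ := by
      intro hmem
      have := hφsupp hmem
      rw [mem_Icc] at this
      linarith
    simpa [hf] using Function.notMem_support.mp hnot
  · -- nonzero
    have hψne : ψ ≠ 0 := by
      intro h
      have h1 : ψ (R^2+2) = 1 :=
        b.one_of_mem_closedBall (mem_closedBall_self (by norm_num))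
      rw [h] at h1
      simp at h1
    have hφne : φ ≠ 0 := iteratedDeriv_ne_zero ψ hψs hψcs hψne (m+1)
    obtain ⟨u, hu⟩ : ∃ u, φ u ≠ 0 := by
      by_contra h
      push_neg at h
      exact hφne (funext h)
    have huIcc := hφsupp (mem_support.mpr hu)
    rw [mem_Icc] at huIcc
    have hu0 : (0:ℝ) ≤ u := by nlinarith [sq_nonneg R]
    intro h0
    set x₀ : EuclideanSpace ℝ (Fin n) :=
      c + Real.sqrt u • EuclideanSpace.single (⟨0, by omega⟩ : Fin n) (1:ℝ) with hx₀
    have hval : f x₀ = φ u := by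
      simp only [hf, hx₀]
      congr 1
      rw [add_sub_cancel_left, norm_smul, EuclideanSpace.norm_single]
      simp only [norm_one, mul_one, Real.norm_eq_abs, abs_of_nonneg (Real.sqrt_nonneg u)]
      exact Real.sq_sqrt hu0
    apply hu
    rw [← hval, h0]
    rfl
  · -- vanishes on U
    intro x hx
    have := hRU hx
    rw [mem_closedBall, dist_eq_norm] at this
    have h2 : ‖x - c‖^2 < R^2 + 1 := by nlinarith [norm_nonneg (x - c)]
    exact hφzero _ h2
  · -- the Radon transform vanishes
    intro θ s hθ hne
    obtain ⟨x₀, hx₀H, hx₀U⟩ := hne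
    rw [mem_setOf_eq] at hx₀H
    have hθ0 : θ ≠ 0 := by
      intro h
      rw [h, norm_zero] at hθ
      norm_num at hθ
    set t : ℝ := s - ⟪c, θ⟫ with htdef
    have hts : t^2 < R^2 + 1 := by
      have h1 : ⟪x₀ - c, θ⟫ = t := by rw [inner_sub_left, hx₀H, htdef]
      have h2 : |t| ≤ R := by
        rw [← h1]
        refine le_trans (abs_real_inner_le_norm _ _) ?_
        rw [hθ, mul_one]
        have := hRU hx₀U
        rwa [mem_closedBall, dist_eq_norm] at this
      nlinarith [sq_abs t, abs_nonneg t]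
    haveI : Fact (Module.finrank ℝ (EuclideanSpace ℝ (Fin n)) = (n-1) + 1) :=
      ⟨by rw [finrank_euclideanSpace, Fintype.card_fin]; omega⟩
    set L : ((ℝ ∙ θ)ᗮ : Submodule ℝ (EuclideanSpace ℝ (Fin n)))
        ≃ₗᵢ[ℝ] EuclideanSpace ℝ (Fin (n-1)) :=
      (OrthonormalBasis.fromOrthogonalSpanSingleton (𝕜 := ℝ) (n-1) hθ0).repr with hL
    set ι : EuclideanSpace ℝ (Fin (n-1)) → EuclideanSpace ℝ (Fin n) :=
      fun y => (c + t • θ) + ((L.symm y : (ℝ ∙ θ)ᗮ) : EuclideanSpace ℝ (Fin n)) with hι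
    have hiso : Isometry ι := by
      apply Isometry.of_dist_eq
      intro y z
      simp only [hι]
      rw [dist_add_left, dist_eq_norm, ← Submodule.coe_sub, Submodule.norm_coe,
        ← dist_eq_norm, L.symm.dist_map]
    have hrange : Set.range ι = {x : EuclideanSpace ℝ (Fin n) | ⟪x, θ⟫ = s} := by
      ext x
      constructor
      · rintro ⟨y, rfl⟩
        have hw : ⟪((L.symm y : (ℝ ∙ θ)ᗮ) : EuclideanSpace ℝ (Fin n)), θ⟫ = 0 :=
          Submodule.mem_orthogonal_singleton_iff_inner_left.mp (L.symm y).2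
        simp only [hι, mem_setOf_eq, inner_add_left, real_inner_smul_left, hw,
          real_inner_self_eq_norm_sq, hθ]
        rw [htdef]
        ring
      · intro hx
        rw [mem_setOf_eq] at hx
        have hwmem : x - c - t • θ ∈ (ℝ ∙ θ)ᗮ := by
          rw [Submodule.mem_orthogonal_singleton_iff_inner_right]
          rw [real_inner_comm, inner_sub_left, inner_sub_left, real_inner_smul_left,
            real_inner_self_eq_norm_sq, hθ, hx, htdef]
          ring
        refine ⟨L ⟨x - c - t • θ, hwmem⟩, ?_⟩
        simp only [hι, LinearIsometryEquiv.symm_apply_apply]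
        abel
    have hd0 : (0:ℝ) ≤ (n:ℝ) - 1 := by
      have : (3:ℝ) ≤ (n:ℝ) := by exact_mod_cast hn
      linarith
    have hmap := hiso.map_hausdorffMeasure (d := (n:ℝ) - 1) (Or.inl hd0)
    rw [hrange] at hmap
    have hemb : MeasurableEmbedding ι := hiso.isClosedEmbedding.measurableEmbedding
    rw [← hmap, hemb.integral_map]
    have hfι : ∀ y : EuclideanSpace ℝ (Fin (n-1)), f (ι y) = φ (t^2 + ‖y‖^2) := by
      intro y
      simp only [hf, hι]
      congr 1
      have h1 : c + t • θ + ((L.symm y : (ℝ ∙ θ)ᗮ) : EuclideanSpace ℝ (Fin n)) - c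
          = t • θ + ((L.symm y : (ℝ ∙ θ)ᗮ) : EuclideanSpace ℝ (Fin n)) := by abel
      rw [h1, norm_add_sq_real]
      have hw : ⟪t • θ, ((L.symm y : (ℝ ∙ θ)ᗮ) : EuclideanSpace ℝ (Fin n))⟫ = 0 := by
        rw [real_inner_smul_left,
          Submodule.mem_orthogonal_singleton_iff_inner_right.mp (L.symm y).2, mul_zero]
      rw [hw, norm_smul, hθ, Real.norm_eq_abs, mul_one, sq_abs,
        show ‖((L.symm y : (ℝ ∙ θ)ᗮ) : EuclideanSpace ℝ (Fin n))‖ = ‖y‖ by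
          rw [Submodule.norm_coe, L.symm.norm_map]]
      ring
    simp_rw [hfι]
    have hcast : (n:ℝ) - 1 = ((n-1 : ℕ) : ℝ) := by
      rw [Nat.cast_sub (by omega)]
      norm_num
    rw [hcast]
    haveI : Nontrivial (EuclideanSpace ℝ (Fin (n-1))) := by
      apply Module.nontrivial_of_finrank_pos (R := ℝ)
      rw [finrank_euclideanSpace, Fintype.card_fin]
      omega
    haveI hHaar : (μH[((n-1:ℕ):ℝ)] : Measure (EuclideanSpace ℝ (Fin (n-1)))).IsAddHaarMeasure := by
      have h : ((n-1:ℕ):ℝ) = ((Module.finrank ℝ (EuclideanSpace ℝ (Fin (n-1)))):ℝ) := by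
        rw [finrank_euclideanSpace, Fintype.card_fin]
      rw [h]
      infer_instance
    rw [MeasureTheory.integral_fun_norm_addHaar
      (μ := (μH[((n-1:ℕ):ℝ)] : Measure (EuclideanSpace ℝ (Fin (n-1)))))
      (fun r => φ (t^2 + r^2))]
    have hkey := key1D ψ hψs hψcs (R^2+1) hψIci m m le_rfl t hts
    have hinner : ∫ y in Ioi (0:ℝ),
        y ^ (Module.finrank ℝ (EuclideanSpace ℝ (Fin (n-1))) - 1) • φ (t^2 + y^2) = 0 := by
      rw [finrank_euclideanSpace, Fintype.card_fin, show n - 1 - 1 = 2*m+1 by omega]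
      simpa [smul_eq_mul] using hkey
    rw [hinner, smul_zero, smul_zero]
end

section
/- Let n ≥ 2 and let 0 < d < n be an odd integer. For every m ≥ 0, every k ≥ 0, and all indices i₁, …, i_m ∈ {1, …, n}, the function x ↦ x_{i₁} x_{i₂} ⋯ x_{i_m} / |x|^{2m + 2k + n − d}, defined on ℝⁿ ∖ {0}, lies in the ℝ-linear span of the set of functions on ℝⁿ ∖ {0} obtained by applying a finite sequence of first-order partial derivatives ∂_{j₁} ∂_{j₂} ⋯ ∂_{j_r} (r ≥ 0, each j_i ∈ {1, …, n}) to the function x ↦ |x|^{−(n−d)}. -/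
open MeasureTheory

/-- The partial derivative `∂ⱼ g` of a function `g : ℝⁿ → ℝ`. -/
noncomputable def partialDeriv' (n : ℕ) (j : Fin n)
    (g : EuclideanSpace ℝ (Fin n) → ℝ) : EuclideanSpace ℝ (Fin n) → ℝ :=
  fun x => fderiv ℝ g x (EuclideanSpace.single j 1)

/-- Iterated partial derivatives `∂_{j₁} ∂_{j₂} ⋯ ∂_{j_r} g`, given by a list of coordinate
directions. -/
noncomputable def iterPartialDeriv (n : ℕ) :
    List (Fin n) → (EuclideanSpace ℝ (Fin n) → ℝ) → EuclideanSpace ℝ (Fin n) → ℝ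
  | [], g => g
  | j :: L, g => iterPartialDeriv n L (partialDeriv' n j g)

namespace RieszAux

variable {n : ℕ}

abbrev E (n : ℕ) := EuclideanSpace ℝ (Fin n)

noncomputable def f₀ (n d : ℕ) : E n → ℝ := fun y => ‖y‖ ^ (-((n : ℝ) - (d : ℝ)))

def mon (l : List (Fin n)) : E n → ℝ := fun y => (l.map (fun i => y i)).prod

lemma iter_append (L₁ L₂ : List (Fin n)) (g : E n → ℝ) :
    iterPartialDeriv n (L₁ ++ L₂) g = iterPartialDeriv n L₂ (iterPartialDeriv n L₁ g) := by
  induction L₁ generalizing g with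
  | nil => rfl
  | cons j L ih => exact ih _

lemma iter_concat (L : List (Fin n)) (j : Fin n) (g : E n → ℝ) :
    iterPartialDeriv n (L ++ [j]) g = partialDeriv' n j (iterPartialDeriv n L g) :=
  iter_append L [j] g

lemma contDiffOn_f₀ (n d : ℕ) :
    ContDiffOn ℝ ⊤ (f₀ n d) {x : E n | x ≠ 0} := by
  intro x hx
  have hx' : x ≠ 0 := hx
  have h1 : ContDiffAt ℝ ⊤ (fun t : ℝ => t ^ (-((n : ℝ) - (d : ℝ)))) ‖x‖ :=
    Real.contDiffAt_rpow_const_of_ne (norm_ne_zero_iff.mpr hx')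
  exact ((h1.comp x (contDiffAt_norm ℝ hx')).contDiffWithinAt)

lemma contDiffOn_partialDeriv {g : E n → ℝ} (j : Fin n)
    (hg : ContDiffOn ℝ ⊤ g {x : E n | x ≠ 0}) :
    ContDiffOn ℝ ⊤ (partialDeriv' n j g) {x : E n | x ≠ 0} := by
  have hopen : IsOpen {x : E n | x ≠ 0} := isOpen_compl_singleton
  have h1 : ContDiffOn ℝ ⊤ (fderiv ℝ g) {x : E n | x ≠ 0} :=
    hg.fderiv_of_isOpen hopen le_top
  exact h1.clm_apply contDiffOn_const

lemma contDiffOn_iter (d : ℕ) (L : List (Fin n)) :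
    ContDiffOn ℝ ⊤ (iterPartialDeriv n L (f₀ n d)) {x : E n | x ≠ 0} := by
  suffices h : ∀ (L : List (Fin n)) (g : E n → ℝ),
      ContDiffOn ℝ ⊤ g {x : E n | x ≠ 0} →
      ContDiffOn ℝ ⊤ (iterPartialDeriv n L g) {x : E n | x ≠ 0} from
    h L _ (contDiffOn_f₀ n d)
  intro L
  induction L with
  | nil => intro g hg; exact hg
  | cons j L ih => intro g hg; exact ih _ (contDiffOn_partialDeriv j hg)

lemma diffAt_iter (d : ℕ) (L : List (Fin n)) {x : E n} (hx : x ≠ 0) :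
    DifferentiableAt ℝ (iterPartialDeriv n L (f₀ n d)) x := by
  have hopen : IsOpen {x : E n | x ≠ 0} := isOpen_compl_singleton
  exact ((contDiffOn_iter d L).differentiableOn (by simp)).differentiableAt
    (hopen.mem_nhds hx)

/-- `F` is representable: off the origin it agrees with a finite linear combination of
iterated partial derivatives of `f₀`. -/
def Rep (n d : ℕ) (F : E n → ℝ) : Prop :=
  ∃ s : Finset (List (Fin n)), ∃ c : List (Fin n) → ℝ, ∀ x : E n, x ≠ 0 →
    F x = ∑ L ∈ s, c L * iterPartialDeriv n L (f₀ n d) x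

lemma rep_congr {d : ℕ} {F G : E n → ℝ} (h : Rep n d F)
    (hFG : ∀ x : E n, x ≠ 0 → F x = G x) : Rep n d G := by
  obtain ⟨s, c, hc⟩ := h
  exact ⟨s, c, fun x hx => (hFG x hx) ▸ hc x hx⟩

lemma rep_gen (d : ℕ) (L : List (Fin n)) : Rep n d (iterPartialDeriv n L (f₀ n d)) :=
  ⟨{L}, fun _ => 1, fun x hx => by simp⟩

lemma rep_zero (d : ℕ) : Rep n d (fun _ : E n => (0 : ℝ)) :=
  ⟨∅, fun _ => 0, fun x hx => by simp⟩

lemma rep_smul {d : ℕ} {F : E n → ℝ} (r : ℝ) (h : Rep n d F) :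
    Rep n d (fun x => r * F x) := by
  obtain ⟨s, c, hc⟩ := h
  refine ⟨s, fun L => r * c L, fun x hx => ?_⟩
  show r * F x = _
  rw [hc x hx, Finset.mul_sum]
  exact Finset.sum_congr rfl fun L _ => by ring

lemma rep_add {d : ℕ} {F G : E n → ℝ} (hF : Rep n d F) (hG : Rep n d G) :
    Rep n d (fun x => F x + G x) := by
  classical
  obtain ⟨s₁, c₁, hc₁⟩ := hF
  obtain ⟨s₂, c₂, hc₂⟩ := hG
  refine ⟨s₁ ∪ s₂, fun L => (if L ∈ s₁ then c₁ L else 0) + (if L ∈ s₂ then c₂ L else 0),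
    fun x hx => ?_⟩
  have key : ∀ (s : Finset (List (Fin n))) (c : List (Fin n) → ℝ), s ⊆ s₁ ∪ s₂ →
      ∑ L ∈ s₁ ∪ s₂, (if L ∈ s then c L else 0) * iterPartialDeriv n L (f₀ n d) x
      = ∑ L ∈ s, c L * iterPartialDeriv n L (f₀ n d) x := by
    intro s c hsub
    have : ∀ L, (if L ∈ s then c L else 0) * iterPartialDeriv n L (f₀ n d) x
        = if L ∈ s then c L * iterPartialDeriv n L (f₀ n d) x else 0 := by
      intro L; split <;> simp
    rw [Finset.sum_congr rfl fun L _ => this L, Finset.sum_ite_mem,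
      Finset.inter_eq_right.mpr hsub]
  show F x + G x = _
  rw [hc₁ x hx, hc₂ x hx, ← key s₁ c₁ Finset.subset_union_left,
    ← key s₂ c₂ Finset.subset_union_right, ← Finset.sum_add_distrib]
  exact Finset.sum_congr rfl fun L _ => by ring

lemma rep_sum {d : ℕ} {ι : Type*} (u : Finset ι) (h : ι → E n → ℝ)
    (hh : ∀ i ∈ u, Rep n d (h i)) :
    Rep n d (fun x => ∑ i ∈ u, h i x) := by
  classical
  induction u using Finset.induction with
  | empty => exact rep_congr (rep_zero d) (by simp)
  | @insert a u ha ih =>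
      have := rep_add (hh a (Finset.mem_insert_self a u))
        (ih fun i hi => hh i (Finset.mem_insert_of_mem hi))
      exact rep_congr this (fun x hx => by rw [Finset.sum_insert ha])

lemma rep_partialDeriv {d : ℕ} {F : E n → ℝ} (j : Fin n) (h : Rep n d F) :
    Rep n d (partialDeriv' n j F) := by
  classical
  obtain ⟨s, c, hc⟩ := h
  refine ⟨s.image (· ++ [j]), fun L => c L.dropLast, fun x hx => ?_⟩
  have hopen : IsOpen {x : E n | x ≠ 0} := isOpen_compl_singleton
  have hmem : {y : E n | y ≠ 0} ∈ nhds x := hopen.mem_nhds hx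
  have hev : F =ᶠ[nhds x] (fun y => ∑ L ∈ s, c L * iterPartialDeriv n L (f₀ n d) y) :=
    Filter.eventuallyEq_of_mem hmem (fun y hy => hc y hy)
  have hfd : fderiv ℝ F x
      = fderiv ℝ (fun y => ∑ L ∈ s, c L * iterPartialDeriv n L (f₀ n d) y) x :=
    hev.fderiv_eq
  have hdiff : ∀ L ∈ s, DifferentiableAt ℝ
      (fun y => c L * iterPartialDeriv n L (f₀ n d) y) x :=
    fun L _ => (diffAt_iter d L hx).const_mul (c L)
  rw [show partialDeriv' n j F x = fderiv ℝ F x (EuclideanSpace.single j 1) from rfl, hfd,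
    fderiv_fun_sum hdiff]
  rw [ContinuousLinearMap.sum_apply]
  rw [Finset.sum_image (fun L₁ _ L₂ _ hL => by
    simpa using congrArg List.dropLast hL)]
  refine Finset.sum_congr rfl fun L hL => ?_
  rw [fderiv_const_mul (diffAt_iter d L hx)]
  simp only [List.dropLast_concat, ContinuousLinearMap.coe_smul', Pi.smul_apply,
    smul_eq_mul]
  congr 1
  rw [iter_concat]
  rfl

lemma hasFDerivAt_normrpow (a : ℝ) {x : E n} (hx : x ≠ 0) :
    HasFDerivAt (fun y : E n => ‖y‖ ^ a)
      ((a * ‖x‖ ^ (a - 2)) • (innerSL ℝ x : E n →L[ℝ] ℝ)) x := by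
  have hnx : (0:ℝ) < ‖x‖ := norm_pos_iff.mpr hx
  have hxx : (inner ℝ x x : ℝ) = ‖x‖ ^ 2 := real_inner_self_eq_norm_sq x
  have h1 : HasFDerivAt (fun y : E n => (inner ℝ y y : ℝ))
      ((fderivInnerCLM ℝ (x, x)).comp
        ((ContinuousLinearMap.id ℝ (E n)).prod (ContinuousLinearMap.id ℝ (E n)))) x :=
    (hasFDerivAt_id x).inner ℝ (hasFDerivAt_id x)
  have h2 : HasDerivAt (fun t : ℝ => t ^ (a / 2))
      ((a / 2) * (inner ℝ x x : ℝ) ^ (a / 2 - 1)) (inner ℝ x x : ℝ) :=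
    Real.hasDerivAt_rpow_const (Or.inl (by rw [hxx]; positivity))
  have h3 := HasDerivAt.comp_hasFDerivAt (f := fun y : E n => (inner ℝ y y : ℝ)) x h2 h1
  have hfun : (fun y : E n => (inner ℝ y y : ℝ) ^ (a / 2)) = fun y : E n => ‖y‖ ^ a := by
    funext y
    rw [real_inner_self_eq_norm_sq, ← Real.rpow_natCast ‖y‖ 2,
      ← Real.rpow_mul (norm_nonneg y)]
    push_cast
    rw [show (2:ℝ) * (a / 2) = a by ring]
  simp only [Function.comp_def] at h3
  rw [hfun] at h3
  refine h3.congr_fderiv (Eq.symm ?_)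
  ext v
  simp only [ContinuousLinearMap.coe_smul', Pi.smul_apply, smul_eq_mul,
    ContinuousLinearMap.coe_comp', Function.comp_apply, ContinuousLinearMap.prod_apply,
    ContinuousLinearMap.coe_id', id_eq, fderivInnerCLM_apply, innerSL_apply_apply]
  rw [hxx, ← Real.rpow_natCast ‖x‖ 2, ← Real.rpow_mul (norm_nonneg x)]
  rw [real_inner_comm v x]
  have : ((2:ℕ):ℝ) * (a / 2 - 1) = a - 2 := by push_cast; ring
  rw [this]
  ring

lemma hasFDerivAt_mon (l : List (Fin n)) (x : E n) :
    HasFDerivAt (mon l)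
      (∑ t : Fin l.length, mon (l.eraseIdx ↑t) x •
        (EuclideanSpace.proj (l.get t) : E n →L[ℝ] ℝ)) x := by
  induction l with
  | nil =>
      simpa [show mon ([] : List (Fin n)) = fun _ => (1:ℝ) from funext fun y => by simp [mon]] using hasFDerivAt_const (1 : ℝ) x
  | cons i l ih =>
      have hfun : mon (i :: l) = fun y : E n => y i * mon l y := by
        funext y; simp [mon]
      rw [hfun]
      have hi : HasFDerivAt (fun y : E n => y i)
          (EuclideanSpace.proj i : E n →L[ℝ] ℝ) x :=
        (EuclideanSpace.proj i : E n →L[ℝ] ℝ).hasFDerivAt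
      have h := hi.mul ih
      refine h.congr_fderiv (Eq.symm ?_)
      simp only [List.length_cons]
      rw [Fin.sum_univ_succ]
      simp only [List.get_cons_zero, List.eraseIdx_cons_zero, Fin.val_succ,
        List.eraseIdx_cons_succ, List.get_cons_succ, Fin.val_zero]
      have hmon : ∀ t : Fin l.length, mon (i :: l.eraseIdx ↑t) x
          = x i * mon (l.eraseIdx ↑t) x := by intro t; simp [mon]
      rw [Finset.sum_congr rfl fun t _ => by rw [hmon t, ← smul_smul]]
      rw [← Finset.smul_sum]
      rw [add_comm]
      rfl

lemma fderiv_mon_rpow (l : List (Fin n)) (a : ℝ) (j : Fin n) {x : E n}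
    (hx : x ≠ 0) :
    fderiv ℝ (fun y => mon l y * ‖y‖ ^ a) x (EuclideanSpace.single j 1)
      = (∑ t : Fin l.length, if l.get t = j then mon (l.eraseIdx ↑t) x else 0) * ‖x‖ ^ a
        + a * ‖x‖ ^ (a - 2) * x j * mon l x := by
  have h := (hasFDerivAt_mon l x).mul (hasFDerivAt_normrpow a hx)
  rw [show (fun y => mon l y * ‖y‖ ^ a) = (mon l * fun y => ‖y‖ ^ a) from rfl, h.fderiv]
  simp only [ContinuousLinearMap.add_apply, ContinuousLinearMap.coe_smul', Pi.smul_apply,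
    ContinuousLinearMap.sum_apply, smul_eq_mul, innerSL_apply_apply,
    EuclideanSpace.inner_single_right,
    EuclideanSpace.single_apply, RCLike.conj_to_real, PiLp.proj_apply]
  have hsum : (∑ t : Fin l.length, mon (l.eraseIdx ↑t) x * (if l.get t = j then (1:ℝ) else 0))
      = ∑ t : Fin l.length, (if l.get t = j then mon (l.eraseIdx ↑t) x else 0) :=
    Finset.sum_congr rfl fun t _ => by split <;> simp
  rw [hsum]
  ring

lemma norm_sq_eq_sum (x : E n) : ∑ j, x j * x j = ‖x‖ ^ 2 := by
  rw [← real_inner_self_eq_norm_sq]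
  simp only [PiLp.inner_apply, RCLike.inner_apply, conj_trivial]

/-- The main induction. -/
lemma rep_main (d : ℕ) (hdn : d < n) (hdodd : Odd d) (N : ℕ) :
    ∀ (k : ℕ) (l : List (Fin n)), 2 * l.length + 3 * k ≤ N →
      Rep n d (fun x => mon l x *
        ‖x‖ ^ ((d : ℝ) - (n : ℝ) - 2 * (l.length : ℝ) - 2 * (k : ℝ))) := by
  have hdltn : (d : ℝ) < (n : ℝ) := by exact_mod_cast hdn
  induction N with
  | zero =>
      intro k l h
      have hl : l = [] := List.length_eq_zero_iff.mp (by omega)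
      have hk : k = 0 := by omega
      subst hl; subst hk
      refine rep_congr (rep_gen d []) (fun x hx => ?_)
      show f₀ n d x = _
      simp only [mon, List.map_nil, List.prod_nil, one_mul, f₀, List.length_nil]
      congr 1
      push_cast
      ring
  | succ N ih =>
      intro k l h
      match l with
      | [] =>
        match k with
        | 0 =>
          refine rep_congr (rep_gen d []) (fun x hx => ?_)
          show f₀ n d x = _
          simp only [mon, List.map_nil, List.prod_nil, one_mul, f₀, List.length_nil]
          congr 1
          push_cast
          ring
        | (k' + 1) =>
          -- Laplacian step
          set b : ℝ := (d : ℝ) - (n : ℝ) - 2 * ((1:ℕ) : ℝ) - 2 * (k' : ℝ) with hb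
          have ihG : ∀ j : Fin n, Rep n d (fun x => mon [j] x * ‖x‖ ^ b) := by
            intro j
            exact ih k' [j] (by simp at h ⊢; omega)
          have hD : ∀ j : Fin n,
              Rep n d (partialDeriv' n j (fun x => mon [j] x * ‖x‖ ^ b)) :=
            fun j => rep_partialDeriv j (ihG j)
          have hSum : Rep n d (fun x => ∑ j : Fin n,
              partialDeriv' n j (fun y => mon [j] y * ‖y‖ ^ b) x) :=
            rep_sum Finset.univ _ (fun j _ => hD j)
          have hnb : (n : ℝ) + b ≠ 0 := by
            intro h0
            have hd' : (d : ℝ) = 2 * (k' : ℝ) + 2 := by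
              rw [hb] at h0; push_cast at h0; linarith
            have : d = 2 * k' + 2 := by exact_mod_cast hd'
            obtain ⟨r, hr⟩ := hdodd
            omega
          refine rep_congr (rep_smul (1 / ((n:ℝ) + b)) hSum) (fun x hx => ?_)
          have hnx : (0:ℝ) < ‖x‖ := norm_pos_iff.mpr hx
          have hj : ∀ j : Fin n, partialDeriv' n j (fun y => mon [j] y * ‖y‖ ^ b) x
              = ‖x‖ ^ b + b * ‖x‖ ^ (b - 2) * (x j * x j) := by
            intro j
            show fderiv ℝ _ x (EuclideanSpace.single j 1) = _
            rw [fderiv_mon_rpow [j] b j hx]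
            simp [mon]
            ring
          rw [Finset.sum_congr rfl fun j _ => hj j]
          rw [Finset.sum_add_distrib, Finset.sum_const, Finset.card_univ, Fintype.card_fin]
          have hsum2 : ∑ j : Fin n, b * ‖x‖ ^ (b - 2) * (x j * x j)
              = b * ‖x‖ ^ (b - 2) * ∑ j, x j * x j := by rw [Finset.mul_sum]
          rw [hsum2, norm_sq_eq_sum]
          have hpow : ‖x‖ ^ (b - 2) * ‖x‖ ^ (2:ℕ) = ‖x‖ ^ b := by
            rw [← Real.rpow_natCast ‖x‖ 2, ← Real.rpow_add hnx]
            norm_num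
          have hexp : (d : ℝ) - (n : ℝ) - 2 * ((List.length ([] : List (Fin n))) : ℝ)
              - 2 * ((k' + 1 : ℕ) : ℝ) = b := by
            simp only [List.length_nil, hb]; push_cast; ring
          rw [hexp]
          simp only [mon, List.map_nil, List.prod_nil, one_mul, nsmul_eq_mul]
          rw [mul_assoc b, hpow]
          field_simp
      | (j :: l') =>
        set a : ℝ := (d : ℝ) - (n : ℝ) - 2 * (l'.length : ℝ) - 2 * (k : ℝ) with ha'
        have ha : a ≠ 0 := by
          have h1 : (0:ℝ) ≤ (l'.length : ℝ) := Nat.cast_nonneg _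
          have h2 : (0:ℝ) ≤ (k : ℝ) := Nat.cast_nonneg _
          rw [ha']; intro h0; linarith
        have ihG : Rep n d (fun x => mon l' x * ‖x‖ ^ a) :=
          ih k l' (by simp at h ⊢; omega)
        have hD : Rep n d (partialDeriv' n j (fun x => mon l' x * ‖x‖ ^ a)) :=
          rep_partialDeriv j ihG
        have hS : ∀ t : Fin l'.length, Rep n d
            (fun x => (if l'.get t = j then mon (l'.eraseIdx ↑t) x else 0) * ‖x‖ ^ a) := by
          intro t
          by_cases hc : l'.get t = j
          · have htlen : (l'.eraseIdx ↑t).length + 1 = l'.length :=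
              List.length_eraseIdx_add_one t.isLt
            have hrep := ih (k + 1) (l'.eraseIdx ↑t) (by simp at h ⊢; omega)
            refine rep_congr hrep (fun x hx => ?_)
            rw [if_pos hc]
            congr 1
            have hcast : ((l'.eraseIdx ↑t).length : ℝ) = (l'.length : ℝ) - 1 := by
              have h2 : ((l'.eraseIdx ↑t).length : ℝ) + 1 = (l'.length : ℝ) := by
                exact_mod_cast congrArg (Nat.cast : ℕ → ℝ) htlen
              linarith
            rw [hcast, ha']
            push_cast
            ring
          · refine rep_congr (rep_zero d) (fun x hx => ?_)
            rw [if_neg hc, zero_mul]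
        have hSum : Rep n d (fun x => ∑ t : Fin l'.length,
            (if l'.get t = j then mon (l'.eraseIdx ↑t) x else 0) * ‖x‖ ^ a) :=
          rep_sum Finset.univ _ (fun t _ => hS t)
        have combo := rep_smul (1 / a)
          (rep_add hD (rep_smul (-1) hSum))
        refine rep_congr combo (fun x hx => ?_)
        have hGx : partialDeriv' n j (fun y => mon l' y * ‖y‖ ^ a) x
            = (∑ t : Fin l'.length, if l'.get t = j then mon (l'.eraseIdx ↑t) x else 0)
                * ‖x‖ ^ a + a * ‖x‖ ^ (a - 2) * x j * mon l' x := by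
          show fderiv ℝ _ x (EuclideanSpace.single j 1) = _
          exact fderiv_mon_rpow l' a j hx
        rw [hGx, ← Finset.sum_mul]
        have hexp : (d : ℝ) - (n : ℝ) - 2 * (((j :: l').length : ℕ) : ℝ) - 2 * (k : ℝ)
            = a - 2 := by
          rw [ha']; push_cast [List.length_cons]; ring
        rw [hexp]
        have hmcons : mon (j :: l') x = x j * mon l' x := by simp [mon]
        rw [hmcons]
        field_simp
        ring

end RieszAux

/-- **Derivatives of the Riesz kernel span the inverted monomial multiples, `d` odd.**
For `0 < d < n` odd, every function `x ↦ x_{i₁} ⋯ x_{i_m} / |x|^{2m + 2k + n - d}` on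
`ℝⁿ ∖ {0}` is a finite ℝ-linear combination of iterated partial derivatives of
`x ↦ |x|^{-(n-d)}`. -/
theorem monomial_riesz_in_span_of_derivs
    (n d : ℕ) (hn : 2 ≤ n) (hd0 : 0 < d) (hdn : d < n) (hdodd : Odd d)
    (m k : ℕ) (i : Fin m → Fin n) :
    (fun x : {x : EuclideanSpace ℝ (Fin n) // x ≠ 0} =>
        (∏ t : Fin m, (x : EuclideanSpace ℝ (Fin n)) (i t)) *
          ‖(x : EuclideanSpace ℝ (Fin n))‖ ^
            (-(2 * (m : ℝ) + 2 * (k : ℝ) + (n : ℝ) - (d : ℝ)))) ∈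
      Submodule.span ℝ
        {g : {x : EuclideanSpace ℝ (Fin n) // x ≠ 0} → ℝ |
          ∃ L : List (Fin n),
            g = fun x : {x : EuclideanSpace ℝ (Fin n) // x ≠ 0} =>
              iterPartialDeriv n L
                (fun y : EuclideanSpace ℝ (Fin n) => ‖y‖ ^ (-((n : ℝ) - (d : ℝ)))) x.1} := by
  classical
  have hrep := RieszAux.rep_main (n := n) d hdn hdodd (2 * (List.ofFn i).length + 3 * k)
    k (List.ofFn i) le_rfl
  have hrep2 : RieszAux.Rep n d (fun x : EuclideanSpace ℝ (Fin n) =>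
      (∏ t : Fin m, x (i t)) * ‖x‖ ^ (-(2 * (m : ℝ) + 2 * (k : ℝ) + (n : ℝ) - (d : ℝ)))) := by
    refine RieszAux.rep_congr hrep (fun x hx => ?_)
    have h1 : RieszAux.mon (List.ofFn i) x = ∏ t : Fin m, x (i t) := by
      simp [RieszAux.mon, List.map_ofFn, List.prod_ofFn, Function.comp_def]
    rw [h1]
    congr 1
    rw [List.length_ofFn]
    push_cast
    ring
  obtain ⟨s, c, hc⟩ := hrep2
  have heq : (fun x : {x : EuclideanSpace ℝ (Fin n) // x ≠ 0} =>
        (∏ t : Fin m, (x : EuclideanSpace ℝ (Fin n)) (i t)) *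
          ‖(x : EuclideanSpace ℝ (Fin n))‖ ^
            (-(2 * (m : ℝ) + 2 * (k : ℝ) + (n : ℝ) - (d : ℝ))))
      = ∑ L ∈ s, c L • (fun x : {x : EuclideanSpace ℝ (Fin n) // x ≠ 0} =>
          iterPartialDeriv n L
            (fun y : EuclideanSpace ℝ (Fin n) => ‖y‖ ^ (-((n : ℝ) - (d : ℝ)))) x.1) := by
    funext x
    rw [Finset.sum_apply]
    simp only [Pi.smul_apply, smul_eq_mul]
    exact hc x.1 x.2
  rw [heq]
  exact Submodule.sum_mem _ fun L hL => Submodule.smul_mem _ _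
    (Submodule.subset_span ⟨L, rfl⟩)
end

section
/- Let n ≥ 2 and let 0 < d < n be an odd integer. For every polynomial p in n real variables, the function x ↦ p(x/|x|²) · |x|^{−(n−d)}, defined on ℝⁿ ∖ {0}, lies in the ℝ-linear span of the set of functions on ℝⁿ ∖ {0} obtained by applying a finite sequence of first-order partial derivatives ∂_{j₁} ∂_{j₂} ⋯ ∂_{j_r} (r ≥ 0, each j_i ∈ {1, …, n}) to the function x ↦ |x|^{−(n−d)}. -/
open MeasureTheory

namespace KelvinAux

open MvPolynomial Real

variable {n : ℕ}

abbrev E (n : ℕ) := EuclideanSpace ℝ (Fin n)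

lemma norm_pow_two_rpow (y : E n) (t : ℝ) : ((‖y‖ ^ 2 : ℝ)) ^ t = ‖y‖ ^ (2 * t) := by
  rw [← Real.rpow_natCast ‖y‖ 2, ← Real.rpow_mul (norm_nonneg y)]
  norm_num

lemma hasFDerivAt_norm_rpow (c : ℝ) {x : E n} (hx : x ≠ 0) :
    HasFDerivAt (fun y : E n => ‖y‖ ^ c) ((c * ‖x‖ ^ (c - 2)) • (innerSL ℝ x)) x := by
  have hx2 : (‖x‖ ^ 2 : ℝ) ≠ 0 := pow_ne_zero 2 (norm_ne_zero_iff.mpr hx)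
  have h1 : HasFDerivAt (fun y : E n => ‖y‖ ^ 2) (2 • (innerSL ℝ x)) x :=
    (hasStrictFDerivAt_norm_sq x).hasFDerivAt
  have h2 := h1.rpow_const (p := c / 2) (Or.inl hx2)
  have hfun : (fun y : E n => (‖y‖ ^ 2 : ℝ) ^ (c / 2)) = fun y : E n => ‖y‖ ^ c := by
    funext y
    rw [norm_pow_two_rpow]
    congr 1
    ring
  rw [hfun] at h2
  refine h2.congr_fderiv ?_
  ext v
  have h3 : (2 : ℝ) * (c / 2 - 1) = c - 2 := by ring
  simp only [ContinuousLinearMap.smul_apply, norm_pow_two_rpow, h3, smul_eq_mul,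
    ContinuousLinearMap.coe_smul', Pi.smul_apply]
  ring

lemma poly_hasFDerivAt (q : MvPolynomial (Fin n) ℝ) (x : E n) :
    HasFDerivAt (fun y : E n => eval (fun i => y i) q)
      (∑ i : Fin n, eval (fun i' => x i') (pderiv i q) • (PiLp.proj 2 _ i :
        E n →L[ℝ] ℝ)) x := by
  induction q using MvPolynomial.induction_on with
  | C a =>
    have : (∑ i : Fin n, eval (fun i' => x i') (pderiv i (C a)) • (PiLp.proj 2 _ i :
        E n →L[ℝ] ℝ)) = 0 := by
      simp [pderiv_C]
    rw [this]
    simpa using hasFDerivAt_const (a : ℝ) x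
  | add p q hp hq =>
    have h := hp.add hq
    simp only [map_add]
    refine h.congr_fderiv (Eq.symm ?_)
    simp [add_smul, Finset.sum_add_distrib]
  | mul_X p j hp =>
    have hX : HasFDerivAt (fun y : E n => y j) (PiLp.proj 2 _ j : E n →L[ℝ] ℝ) x :=
      (PiLp.proj 2 _ j : E n →L[ℝ] ℝ).hasFDerivAt
    have h : HasFDerivAt (fun y : E n => eval (fun i => y i) p * y j) _ x := hp.mul hX
    have hfun : (fun y : E n => eval (fun i => y i) p * y j)
        = fun y : E n => eval (fun i => y i) (p * X j) := by
      funext y; simp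
    rw [hfun] at h
    refine h.congr_fderiv (Eq.symm ?_)
    ext v
    simp only [ContinuousLinearMap.sum_apply, ContinuousLinearMap.smul_apply, smul_eq_mul,
      PiLp.proj_apply, ContinuousLinearMap.add_apply, pderiv_mul, pderiv_X, map_add, map_mul,
      eval_X, Pi.smul_apply]
    simp only [Pi.single_apply, apply_ite (eval (fun i' => x i')), map_one, map_zero,
      add_mul, mul_ite, mul_one, mul_zero, ite_mul, zero_mul, Finset.sum_add_distrib,
      Finset.sum_ite_eq', Finset.mem_univ, if_true, Finset.mul_sum]
    rw [add_comm]
    congr 1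
    · simp [Finset.sum_ite_eq]
    · apply Finset.sum_congr rfl
      intro i _
      ring

lemma pd_formula (q : MvPolynomial (Fin n) ℝ) (c : ℝ) {x : E n} (hx : x ≠ 0) (j : Fin n) :
    fderiv ℝ (fun y : E n => eval (fun i => y i) q * ‖y‖ ^ c) x (EuclideanSpace.single j 1)
      = eval (fun i => x i) (pderiv j q) * ‖x‖ ^ c
        + c * ‖x‖ ^ (c - 2) * x j * eval (fun i => x i) q := by
  classical
  have h : HasFDerivAt (fun y : E n => eval (fun i => y i) q * ‖y‖ ^ c) _ x :=
    (poly_hasFDerivAt q x).mul (hasFDerivAt_norm_rpow c hx)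
  rw [h.fderiv]
  have hinner : (innerSL ℝ x) (EuclideanSpace.single j (1 : ℝ)) = x j := by
    rw [innerSL_apply_apply, EuclideanSpace.inner_single_right]
    simp
  simp only [ContinuousLinearMap.add_apply, ContinuousLinearMap.smul_apply, smul_eq_mul,
    ContinuousLinearMap.sum_apply, PiLp.proj_apply, hinner]
  have hs : ∀ i : Fin n, (EuclideanSpace.single j (1 : ℝ)) i = if i = j then 1 else 0 := by
    intro i
    rw [EuclideanSpace.single_apply]
  simp only [hs, mul_ite, mul_one, mul_zero, Finset.sum_ite_eq', Finset.mem_univ, if_true]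
  ring

/-- The submodule of full-space functions spanned by iterated partial derivatives. -/
def TT (n : ℕ) (α : ℝ) : Submodule ℝ (E n → ℝ) :=
  Submodule.span ℝ {g | ∃ L : List (Fin n), g = iterPartialDeriv n L (fun y => ‖y‖ ^ (-α))}

/-- `f` agrees on the punctured space with some member of `TT n α`. -/
def InS (n : ℕ) (α : ℝ) (f : E n → ℝ) : Prop :=
  ∃ G ∈ TT n α, ∀ x : E n, x ≠ 0 → G x = f x

variable {α : ℝ}

lemma InS_congr {f h : E n → ℝ} (hf : InS n α f) (hfh : ∀ x : E n, x ≠ 0 → f x = h x) :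
    InS n α h := by
  obtain ⟨G, hG, hGf⟩ := hf
  exact ⟨G, hG, fun x hx => (hGf x hx).trans (hfh x hx)⟩

lemma InS_zero : InS n α (fun _ => 0) := ⟨0, zero_mem _, fun _ _ => rfl⟩

lemma InS_add {f g : E n → ℝ} (hf : InS n α f) (hg : InS n α g) :
    InS n α (fun x => f x + g x) := by
  obtain ⟨F, hF, hFf⟩ := hf
  obtain ⟨G, hG, hGg⟩ := hg
  exact ⟨F + G, add_mem hF hG, fun x hx => by
    simp [Pi.add_apply, hFf x hx, hGg x hx]⟩

lemma InS_smul (c : ℝ) {f : E n → ℝ} (hf : InS n α f) :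
    InS n α (fun x => c * f x) := by
  obtain ⟨F, hF, hFf⟩ := hf
  exact ⟨c • F, Submodule.smul_mem _ c hF, fun x hx => by
    simp [Pi.smul_apply, hFf x hx]⟩

lemma InS_sub {f g : E n → ℝ} (hf : InS n α f) (hg : InS n α g) :
    InS n α (fun x => f x - g x) := by
  have := InS_add hf (InS_smul (-1) hg)
  exact InS_congr this (fun x hx => by ring)

lemma InS_sum {ι : Type*} (s : Finset ι) (f : ι → E n → ℝ) (hf : ∀ i ∈ s, InS n α (f i)) :
    InS n α (fun x => ∑ i ∈ s, f i x) := by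
  classical
  induction s using Finset.induction_on with
  | empty => exact InS_congr InS_zero (by simp)
  | insert a s hni ih =>
    have h1 := hf a (Finset.mem_insert_self a s)
    have h2 := ih (fun i hi => hf i (Finset.mem_insert_of_mem hi))
    exact InS_congr (InS_add h1 h2) (fun x hx => by
      rw [Finset.sum_insert hni])

lemma InS_base : InS n α (fun y : E n => ‖y‖ ^ (-α)) :=
  ⟨_, Submodule.subset_span ⟨[], rfl⟩, fun _ _ => rfl⟩

lemma iter_append (j : Fin n) : ∀ (L : List (Fin n)) (g : E n → ℝ),
    iterPartialDeriv n (L ++ [j]) g = partialDeriv' n j (iterPartialDeriv n L g) := by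
  intro L
  induction L with
  | nil => intro g; rfl
  | cons a L ih =>
    intro g
    show iterPartialDeriv n (L ++ [j]) (partialDeriv' n a g) = _
    rw [ih]
    rfl

lemma contDiffAt_iter (L : List (Fin n)) :
    ∀ (g : E n → ℝ), (∀ x : E n, x ≠ 0 → ContDiffAt ℝ ⊤ g x) →
    ∀ x : E n, x ≠ 0 → ContDiffAt ℝ ⊤ (iterPartialDeriv n L g) x := by
  induction L with
  | nil => intro g hg; exact hg
  | cons j L ih =>
    intro g hg
    apply ih
    intro x hx
    have h1 : ContDiffAt ℝ ⊤ (fderiv ℝ g) x := by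
      -- need derivative info on a neighborhood
      exact (hg x hx).fderiv_right le_top
    exact h1.clm_apply contDiffAt_const

lemma base_smooth {x : E n} (hx : x ≠ 0) :
    ContDiffAt ℝ ⊤ (fun y : E n => ‖y‖ ^ (-α)) x := by
  have h1 : ContDiffAt ℝ ⊤ (fun y : E n => ‖y‖) x := contDiffAt_norm ℝ hx
  exact h1.rpow_const_of_ne (norm_ne_zero_iff.mpr hx)

lemma TT_smooth {G : E n → ℝ} (hG : G ∈ TT n α) :
    ∀ x : E n, x ≠ 0 → ContDiffAt ℝ ⊤ G x := by
  induction hG using Submodule.span_induction with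
  | mem g hg =>
    obtain ⟨L, rfl⟩ := hg
    exact contDiffAt_iter L _ (fun x hx => base_smooth hx)
  | zero => intro x hx; exact contDiffAt_const
  | add f g hf hg ihf ihg => intro x hx; exact (ihf x hx).add (ihg x hx)
  | smul a f hf ihf => intro x hx; exact (ihf x hx).const_smul a

lemma TT_deriv {G : E n → ℝ} (hG : G ∈ TT n α) (j : Fin n) :
    ∃ G' ∈ TT n α, ∀ x : E n, x ≠ 0 →
      G' x = fderiv ℝ G x (EuclideanSpace.single j 1) := by
  induction hG using Submodule.span_induction with
  | mem g hg =>
    obtain ⟨L, rfl⟩ := hg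
    refine ⟨iterPartialDeriv n (L ++ [j]) (fun y => ‖y‖ ^ (-α)),
      Submodule.subset_span ⟨L ++ [j], rfl⟩, fun x hx => ?_⟩
    rw [iter_append]
    rfl
  | zero =>
    refine ⟨0, zero_mem _, fun x hx => ?_⟩
    have h0 : (0 : E n → ℝ) = fun _ => (0 : ℝ) := rfl
    rw [h0, fderiv_const_apply (𝕜 := ℝ) (0 : ℝ) (x := x)]
    simp
  | add f g hf hg ihf ihg =>
    obtain ⟨F', hF', hFeq⟩ := ihf
    obtain ⟨G', hG', hGeq⟩ := ihg
    refine ⟨F' + G', add_mem hF' hG', fun x hx => ?_⟩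
    have hdf : DifferentiableAt ℝ f x := (TT_smooth hf x hx).differentiableAt (by simp)
    have hdg : DifferentiableAt ℝ g x := (TT_smooth hg x hx).differentiableAt (by simp)
    rw [Pi.add_apply, hFeq x hx, hGeq x hx, fderiv_add hdf hdg]
    simp
  | smul a f hf ihf =>
    obtain ⟨F', hF', hFeq⟩ := ihf
    refine ⟨a • F', Submodule.smul_mem _ a hF', fun x hx => ?_⟩
    have hdf : DifferentiableAt ℝ f x := (TT_smooth hf x hx).differentiableAt (by simp)
    rw [Pi.smul_apply, hFeq x hx, fderiv_const_smul hdf a]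
    simp

lemma InS_deriv {f : E n → ℝ} (hf : InS n α f) (j : Fin n) :
    InS n α (fun x => fderiv ℝ f x (EuclideanSpace.single j 1)) := by
  obtain ⟨G, hG, hGf⟩ := hf
  obtain ⟨G', hG', hGeq⟩ := TT_deriv hG j
  refine ⟨G', hG', fun x hx => ?_⟩
  rw [hGeq x hx]
  congr 1
  apply Filter.EventuallyEq.fderiv_eq
  have hmem : {(0 : E n)}ᶜ ∈ nhds x := (isOpen_compl_singleton).mem_nhds hx
  exact Filter.eventuallyEq_of_mem hmem (fun y hy => hGf y hy)

lemma inner_single (x : E n) (j : Fin n) :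
    (innerSL ℝ x) (EuclideanSpace.single j (1 : ℝ)) = x j := by
  rw [innerSL_apply_apply, EuclideanSpace.inner_single_right]
  simp

lemma sum_sq (x : E n) : ∑ j, (x j) ^ 2 = ‖x‖ ^ 2 := by
  rw [EuclideanSpace.norm_eq, Real.sq_sqrt (by positivity)]
  simp [sq_abs]

lemma norm_rpow_mul_sq {x : E n} (hx : x ≠ 0) (t : ℝ) :
    ‖x‖ ^ t * ‖x‖ ^ 2 = ‖x‖ ^ (t + 2) := by
  have h : (0 : ℝ) < ‖x‖ := norm_pos_iff.mpr hx
  rw [← Real.rpow_natCast ‖x‖ 2, ← Real.rpow_add h]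
  norm_num

lemma B_lemma (n d : ℕ) (hdn : d < n) (hdodd : Odd d) (k : ℕ) :
    InS n ((n : ℝ) - d) (fun x : E n => ‖x‖ ^ (-(((n : ℝ) - d) + 2 * k))) := by
  induction k with
  | zero => exact InS_congr InS_base (fun x hx => by norm_num)
  | succ k ih =>
    classical
    set α : ℝ := (n : ℝ) - d with hα
    set γ : ℝ := α + 2 * k with hγ
    have hdn' : (d : ℝ) < n := by exact_mod_cast hdn
    have hαpos : 0 < α := by simp [hα]; linarith
    have hγpos : 0 < γ := by positivity
    have hC : γ * (γ + 2 - n) ≠ 0 := by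
      have h2 : γ + 2 - n = 2 * k + 2 - d := by simp [hγ, hα]; ring
      have h3 : (2 * k + 2 : ℝ) - d ≠ 0 := by
        intro h
        have : d = 2 * k + 2 := by exact_mod_cast (by linarith : (d : ℝ) = 2 * k + 2)
        rcases hdodd with ⟨m, hm⟩
        omega
      rw [h2]
      exact mul_ne_zero (ne_of_gt hγpos) h3
    have h1 : ∀ j : Fin n, InS n α
        (fun x => fderiv ℝ (fun y : E n => ‖y‖ ^ (-γ)) x (EuclideanSpace.single j 1)) :=
      fun j => InS_deriv ih j
    have h2 : ∀ j : Fin n, InS n α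
        (fun x => eval (fun i => x i) (C (-γ) * X j) * ‖x‖ ^ (-γ - 2)) := by
      intro j
      refine InS_congr (h1 j) (fun x hx => ?_)
      rw [(hasFDerivAt_norm_rpow (-γ) hx).fderiv]
      simp only [ContinuousLinearMap.smul_apply, smul_eq_mul, inner_single, eval_mul, eval_C,
        eval_X]
      ring_nf
    have h3 : ∀ j : Fin n, InS n α
        (fun x => fderiv ℝ (fun y : E n => eval (fun i => y i) (C (-γ) * X j) * ‖y‖ ^ (-γ - 2))
          x (EuclideanSpace.single j 1)) :=
      fun j => InS_deriv (h2 j) j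
    have h4 := InS_sum Finset.univ _ (fun j _ => h3 j)
    refine InS_congr (InS_smul ((γ * (γ + 2 - n))⁻¹) h4) (fun x hx => ?_)
    have hterm : ∀ j : Fin n,
        fderiv ℝ (fun y : E n => eval (fun i => y i) (C (-γ) * X j) * ‖y‖ ^ (-γ - 2)) x
          (EuclideanSpace.single j 1)
        = (-γ) * ‖x‖ ^ (-γ - 2) + ((-γ - 2) * (-γ) * ‖x‖ ^ (-γ - 2 - 2)) * (x j) ^ 2 := by
      intro j
      rw [pd_formula _ _ hx j]
      have hp : pderiv j (C (-γ) * X j) = C (-γ) := by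
        simp [pderiv_mul]
      rw [hp]
      simp only [eval_C, eval_mul, eval_X]
      ring
    have hsum : (∑ j : Fin n, fderiv ℝ
          (fun y : E n => eval (fun i => y i) (C (-γ) * X j) * ‖y‖ ^ (-γ - 2)) x
          (EuclideanSpace.single j 1))
        = γ * (γ + 2 - n) * ‖x‖ ^ (-γ - 2) := by
      rw [Finset.sum_congr rfl (fun j _ => hterm j), Finset.sum_add_distrib,
        Finset.sum_const, ← Finset.mul_sum, sum_sq, Finset.card_univ, Fintype.card_fin,
        nsmul_eq_mul]
      rw [mul_assoc ((-γ - 2) * (-γ)), norm_rpow_mul_sq hx]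
      rw [show (-γ - 2 - 2 + 2 : ℝ) = -γ - 2 by ring]
      ring
    rw [hsum]
    rw [show (-(α + 2 * ((k : ℕ) + 1 : ℕ)) : ℝ) = -γ - 2 by push_cast [hγ]; ring]
    field_simp
    exact div_self (right_ne_zero_of_mul hC)

lemma M_lemma (n d : ℕ) (hdn : d < n) (hdodd : Odd d) :
    ∀ m : ℕ, ∀ β : Fin n →₀ ℕ, (β.sum fun _ e => e) = m → ∀ k : ℕ, m ≤ k →
    InS n ((n : ℝ) - d) (fun x : E n =>
      eval (fun i => x i) (monomial β (1 : ℝ)) * ‖x‖ ^ (-(((n : ℝ) - d) + 2 * k))) := by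
  intro m
  induction m using Nat.strong_induction_on with
  | _ m IH =>
  intro β hβ k hk
  set α : ℝ := (n : ℝ) - d with hα
  cases m with
  | zero =>
    have hβ0 : β = 0 := by
      by_contra hne
      obtain ⟨a, ha⟩ := Finsupp.ne_iff.mp hne
      have ha' : β a ≠ 0 := by simpa using ha
      have hmem : a ∈ β.support := Finsupp.mem_support_iff.mpr ha'
      have hle : β a ≤ ∑ i ∈ β.support, β i :=
        Finset.single_le_sum (f := fun i => β i) (fun i _ => Nat.zero_le _) hmem
      have hsum0 : ∑ i ∈ β.support, β i = 0 := by rw [← hβ]; rfl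
      omega
    subst hβ0
    refine InS_congr (B_lemma n d hdn hdodd k) (fun x hx => ?_)
    have h1 : (monomial (0 : Fin n →₀ ℕ) (1 : ℝ) : MvPolynomial (Fin n) ℝ) = 1 := by
      simp
    rw [h1, map_one, one_mul]
  | succ m' =>
    classical
    obtain ⟨j, hj⟩ : ∃ j, β j ≠ 0 := by
      by_contra h
      push_neg at h
      have hb0 : β = 0 := by ext a; exact h a
      rw [hb0] at hβ
      simp at hβ
    set β' : Fin n →₀ ℕ := β - Finsupp.single j 1 with hβ'
    have hβdecomp : β = β' + Finsupp.single j 1 := by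
      ext a
      by_cases haj : a = j
      · subst haj
        simp [hβ', Finsupp.single_apply]
        omega
      · simp [hβ', Finsupp.single_apply, Ne.symm haj, haj]
    have hsum' : (β'.sum fun _ e => e) = m' := by
      have hcongr := congrArg (fun f : Fin n →₀ ℕ => f.sum fun _ e => e) hβdecomp
      rw [Finsupp.sum_add_index' (fun a => rfl) (fun a b₁ b₂ => rfl)] at hcongr
      rw [Finsupp.sum_single_index rfl] at hcongr
      omega
    set k' : ℕ := k - 1 with hk'
    have hkk : k = k' + 1 := by omega
    have hm'k' : m' ≤ k' := by omega
    have hf := IH m' (by omega) β' hsum' k' hm'k'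
    have hdf := InS_deriv hf j
    set β'' : Fin n →₀ ℕ := β' - Finsupp.single j 1 with hβ''
    have hsub : ∀ a, β'' a ≤ β' a := by
      intro a
      simp [hβ'', Finsupp.single_apply]
    have hsupp'' : β''.support ⊆ β'.support := by
      intro a ha
      rw [Finsupp.mem_support_iff] at *
      have := hsub a
      omega
    have hsum'' : (β''.sum fun _ e => e) ≤ m' := by
      calc (β''.sum fun _ e => e) = ∑ a ∈ β''.support, β'' a := rfl
        _ ≤ ∑ a ∈ β''.support, β' a := Finset.sum_le_sum (fun a _ => hsub a)
        _ ≤ ∑ a ∈ β'.support, β' a :=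
            Finset.sum_le_sum_of_subset hsupp''
        _ = m' := hsum'
    have hg := IH (β''.sum fun _ e => e) (by omega) β'' rfl k' (by omega)
    have hcne : (-(α + 2 * (k' : ℝ))) ≠ 0 := by
      have hdn' : (d : ℝ) < n := by exact_mod_cast hdn
      have : 0 < α := by rw [hα]; linarith
      have : 0 < α + 2 * (k' : ℝ) := by positivity
      linarith
    refine InS_congr (InS_smul (1 / (-(α + 2 * (k' : ℝ))))
      (InS_sub hdf (InS_smul ((β' j : ℝ)) hg))) (fun x hx => ?_)
    have hpd := pd_formula (monomial β' (1 : ℝ)) (-(α + 2 * k')) hx j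
    have hpderiv : eval (fun i => x i) (pderiv j (monomial β' (1 : ℝ)))
        = (β' j : ℝ) * eval (fun i => x i) (monomial β'' (1 : ℝ)) := by
      rw [pderiv_monomial]
      simp only [eval_monomial]
      ring
    have hevalβ : eval (fun i => x i) (monomial β (1 : ℝ))
        = x j * eval (fun i => x i) (monomial β' (1 : ℝ)) := by
      conv_lhs => rw [hβdecomp]
      rw [show monomial (β' + Finsupp.single j 1) (1 : ℝ)
          = monomial β' 1 * monomial (Finsupp.single j 1) 1 from by
        rw [monomial_mul]; norm_num]
      rw [eval_mul]
      have hXj : (monomial (Finsupp.single j 1) (1 : ℝ) : MvPolynomial (Fin n) ℝ) = X j := rfl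
      rw [hXj, eval_X]
      ring
    rw [hpd, hpderiv, hevalβ]
    have hexp : (-(α + 2 * (k : ℝ))) = -(α + 2 * (k' : ℝ)) - 2 := by
      rw [hkk]
      push_cast
      ring
    rw [hexp]
    set c : ℝ := -(α + 2 * (k' : ℝ)) with hc
    set A : ℝ := ‖x‖ ^ c with hA
    set B : ℝ := ‖x‖ ^ (c - 2) with hB
    field_simp
    ring

lemma kelvin_monomial (v : Fin n →₀ ℕ) (α : ℝ) {x : E n} (hx : x ≠ 0) :
    eval (fun j => x j / ‖x‖ ^ 2) (monomial v (1 : ℝ)) * ‖x‖ ^ (-α)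
      = eval (fun i => x i) (monomial v (1 : ℝ))
        * ‖x‖ ^ (-(α + 2 * ((v.sum fun _ e => e) : ℕ))) := by
  have hnorm : (0 : ℝ) < ‖x‖ := norm_pos_iff.mpr hx
  have hs : (‖x‖ ^ 2 : ℝ) ≠ 0 := by positivity
  rw [eval_monomial, eval_monomial]
  simp only [Finsupp.prod, one_mul]
  have h1 : ∏ i ∈ v.support, (x i / ‖x‖ ^ 2) ^ v i
      = (∏ i ∈ v.support, x i ^ v i) / (‖x‖ ^ 2) ^ (∑ i ∈ v.support, v i) := by
    rw [← Finset.prod_pow_eq_pow_sum, ← Finset.prod_div_distrib]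
    apply Finset.prod_congr rfl
    intro i _
    rw [div_pow]
  rw [h1]
  have h2 : ((‖x‖ ^ 2 : ℝ)) ^ (∑ i ∈ v.support, v i)
      = ‖x‖ ^ ((2 * (∑ i ∈ v.support, v i) : ℕ) : ℝ) := by
    rw [← pow_mul, ← Real.rpow_natCast]
  have h3 : (v.sum fun _ e => e) = ∑ i ∈ v.support, v i := rfl
  rw [h2, div_mul_eq_mul_div, div_eq_mul_inv, ← Real.rpow_neg (le_of_lt hnorm),
    mul_assoc, ← Real.rpow_add hnorm, h3]
  congr 2
  push_cast
  ring


lemma InS_target (n d : ℕ) (hdn : d < n) (hdodd : Odd d) (p : MvPolynomial (Fin n) ℝ) :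
    InS n ((n : ℝ) - d) (fun x : E n =>
      eval (fun j => x j / ‖x‖ ^ 2) p * ‖x‖ ^ (-((n : ℝ) - (d : ℝ)))) := by
  classical
  have h_each : ∀ v ∈ p.support, InS n ((n : ℝ) - d) (fun x : E n =>
      coeff v p * (eval (fun i => x i) (monomial v (1 : ℝ))
        * ‖x‖ ^ (-(((n : ℝ) - d) + 2 * ((v.sum fun _ e => e) : ℕ))))) := by
    intro v _
    exact InS_smul (coeff v p)
      (M_lemma n d hdn hdodd (v.sum fun _ e => e) v rfl (v.sum fun _ e => e) le_rfl)
  have hsum := InS_sum p.support _ h_each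
  refine InS_congr hsum (fun x hx => ?_)
  have hexpand : eval (fun j => x j / ‖x‖ ^ 2) p
      = ∑ v ∈ p.support, coeff v p * eval (fun j => x j / ‖x‖ ^ 2) (monomial v (1 : ℝ)) := by
    conv_lhs => rw [p.as_sum]
    rw [map_sum]
    apply Finset.sum_congr rfl
    intro v _
    rw [eval_monomial, eval_monomial]
    ring
  rw [hexpand, Finset.sum_mul]
  apply Finset.sum_congr rfl
  intro v _
  rw [mul_assoc, kelvin_monomial v ((n : ℝ) - d) hx]

end KelvinAux

/-- **Kelvin-transformed polynomial multiples of the Riesz kernel lie in the span of its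
derivatives, `d` odd.** For `0 < d < n` odd and any polynomial `p` in `n` variables, the
function `x ↦ p(x/|x|²) · |x|^{-(n-d)}` on `ℝⁿ ∖ {0}` is a finite ℝ-linear combination of
iterated partial derivatives of `x ↦ |x|^{-(n-d)}`. -/
theorem kelvin_poly_riesz_in_span_of_derivs
    (n d : ℕ) (hn : 2 ≤ n) (hd0 : 0 < d) (hdn : d < n) (hdodd : Odd d)
    (p : MvPolynomial (Fin n) ℝ) :
    (fun x : {x : EuclideanSpace ℝ (Fin n) // x ≠ 0} =>
        MvPolynomial.eval (fun j : Fin n => x.1 j / ‖x.1‖ ^ 2) p *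
          ‖x.1‖ ^ (-((n : ℝ) - (d : ℝ)))) ∈
      Submodule.span ℝ
        {g : {x : EuclideanSpace ℝ (Fin n) // x ≠ 0} → ℝ |
          ∃ L : List (Fin n),
            g = fun x : {x : EuclideanSpace ℝ (Fin n) // x ≠ 0} =>
              iterPartialDeriv n L
                (fun y : EuclideanSpace ℝ (Fin n) => ‖y‖ ^ (-((n : ℝ) - (d : ℝ)))) x.1} := by
  classical
  obtain ⟨G, hG, hGeq⟩ := KelvinAux.InS_target n d hdn hdodd p
  set R : (EuclideanSpace ℝ (Fin n) → ℝ) →ₗ[ℝ]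
      ({x : EuclideanSpace ℝ (Fin n) // x ≠ 0} → ℝ) :=
    LinearMap.funLeft ℝ ℝ (Subtype.val) with hR
  have hset : {g : {x : EuclideanSpace ℝ (Fin n) // x ≠ 0} → ℝ |
      ∃ L : List (Fin n), g = fun x => iterPartialDeriv n L
        (fun y : EuclideanSpace ℝ (Fin n) => ‖y‖ ^ (-((n : ℝ) - (d : ℝ)))) x.1}
      = R '' {g : EuclideanSpace ℝ (Fin n) → ℝ | ∃ L : List (Fin n),
          g = iterPartialDeriv n L
            (fun y : EuclideanSpace ℝ (Fin n) => ‖y‖ ^ (-((n : ℝ) - (d : ℝ))))} := by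
    ext g
    constructor
    · rintro ⟨L, rfl⟩
      exact ⟨_, ⟨L, rfl⟩, rfl⟩
    · rintro ⟨G', ⟨L, rfl⟩, rfl⟩
      exact ⟨L, rfl⟩
  rw [hset, Submodule.span_image]
  refine Submodule.mem_map.mpr ⟨G, hG, ?_⟩
  funext x
  exact hGeq x.1 x.2
end

section
/- Let 0 < a < b < ∞ and let f : ℝ → ℝ be a smooth function whose support is a compact subset of the open interval (a, b). Suppose that for some nonnegative integer k, ∫_a^b f(r) (1 − s²/r²)^{(2k−1)/2} dr = 0 for all s ∈ [0, a). Then f is identically zero. -/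
open MeasureTheory Filter
open scoped ENNReal NNReal
set_option maxHeartbeats 1000000

noncomputable def bcoe (α : ℝ) (n : ℕ) : ℝ :=
  (∏ j ∈ Finset.range n, (α - j)) / n.factorial

lemma bcoe_zero (α : ℝ) : bcoe α 0 = 1 := by simp [bcoe]

lemma bcoe_succ (α : ℝ) (n : ℕ) :
    bcoe α (n + 1) = bcoe α n * (α - n) / (n + 1) := by
  unfold bcoe
  rw [Finset.prod_range_succ, Nat.factorial_succ]
  push_cast
  rw [div_mul_eq_mul_div, div_div, mul_comm ((n:ℝ)+1)]

lemma abs_bcoe_succ (α : ℝ) (n : ℕ) :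
    |bcoe α (n + 1)| = |bcoe α n| * |α - n| / (n + 1) := by
  rw [bcoe_succ, abs_div, abs_mul, abs_of_nonneg (by positivity : (0:ℝ) ≤ (n:ℝ) + 1)]

/-- Master summability lemma. -/
lemma summable_bcoe_aux (α : ℝ) {x : ℝ} (hx : |x| < 1) :
    Summable (fun n : ℕ => ((n:ℝ) + 1) * |bcoe α n| * |x| ^ n) := by
  have hx0 : 0 ≤ |x| := abs_nonneg x
  set r : ℝ := (1 + |x|) / 2 with hr
  have hr1 : r < 1 := by rw [hr]; linarith
  have hxr : |x| < r := by rw [hr]; linarith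
  apply summable_of_ratio_norm_eventually_le hr1
  rw [Filter.eventually_atTop]
  refine ⟨max 1 ⌈(6 * |α| + 2) / (1 - |x|)⌉₊, fun n hn => ?_⟩
  have hn1 : 1 ≤ n := le_trans (le_max_left _ _) hn
  have hn1' : (1:ℝ) ≤ (n:ℝ) := by exact_mod_cast hn1
  have hn2 : (6 * |α| + 2) / (1 - |x|) ≤ (n : ℝ) := by
    refine le_trans (Nat.le_ceil _) ?_
    exact_mod_cast Nat.cast_le.mpr (le_trans (le_max_right _ _) hn)
  have hn3 : 6 * |α| + 2 ≤ (n : ℝ) * (1 - |x|) := by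
    rw [div_le_iff₀ (by linarith)] at hn2; linarith
  have hnn : (0:ℝ) < (n:ℝ) + 1 := by positivity
  have habs : |α - (n:ℝ)| ≤ (n:ℝ) + |α| := by
    calc |α - (n:ℝ)| ≤ |α| + |(n:ℝ)| := abs_sub _ _
    _ = (n:ℝ) + |α| := by rw [abs_of_nonneg (by positivity : (0:ℝ) ≤ (n:ℝ))]; ring
  have h6 : ((n:ℝ) + 2) * |α - (n:ℝ)| * |x| ≤ r * (((n:ℝ)+1) * ((n:ℝ)+1)) := by
    have h7 : ((n:ℝ) + 2) * |α - (n:ℝ)| * |x| ≤ ((n:ℝ)+2) * (((n:ℝ)+|α|) * |x|) := by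
      rw [mul_assoc]
      refine mul_le_mul_of_nonneg_left ?_ (by positivity)
      exact mul_le_mul_of_nonneg_right habs hx0
    refine le_trans h7 ?_
    rw [hr]
    nlinarith [mul_le_mul_of_nonneg_left hn3 (le_trans zero_le_one hn1'),
      abs_nonneg α, mul_nonneg (abs_nonneg α) hx0, hx.le]
  -- ratio bound
  have key : ((n:ℝ) + 1 + 1) * |bcoe α (n+1)| * |x| ^ (n+1)
      ≤ r * (((n:ℝ) + 1) * |bcoe α n| * |x| ^ n) := by
    rw [abs_bcoe_succ, pow_succ]
    have hb0 : (0:ℝ) ≤ |bcoe α n| := abs_nonneg _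
    have hp0 : (0:ℝ) ≤ |x| ^ n := by positivity
    have hdiv : ((n:ℝ) + 2) * |α - ↑n| * |x| / (↑n + 1) ≤ r * (↑n + 1) := by
      rw [div_le_iff₀ hnn]
      calc ((n:ℝ) + 2) * |α - ↑n| * |x| ≤ r * (((n:ℝ)+1) * ((n:ℝ)+1)) := h6
      _ = r * (↑n + 1) * (↑n + 1) := by ring
    calc ((n:ℝ) + 1 + 1) * (|bcoe α n| * |α - ↑n| / (↑n + 1)) * (|x| ^ n * |x|)
        = (((n:ℝ) + 2) * |α - ↑n| * |x| / (↑n + 1)) * (|bcoe α n| * |x| ^ n) := by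
          ring
      _ ≤ (r * (↑n + 1)) * (|bcoe α n| * |x| ^ n) :=
          mul_le_mul_of_nonneg_right hdiv (by positivity)
      _ = r * ((↑n + 1) * |bcoe α n| * |x| ^ n) := by ring
  have hnorm : ∀ m : ℕ, ‖((m:ℝ) + 1) * |bcoe α m| * |x| ^ m‖
      = ((m:ℝ) + 1) * |bcoe α m| * |x| ^ m := fun m =>
    Real.norm_of_nonneg (by positivity)
  rw [hnorm, hnorm]
  push_cast
  exact key

lemma summable_bcoe (α : ℝ) {x : ℝ} (hx : |x| < 1) :
    Summable (fun n : ℕ => bcoe α n * x ^ n) := by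
  refine Summable.of_norm_bounded (summable_bcoe_aux α hx) (fun n => ?_)
  rw [Real.norm_eq_abs, abs_mul, abs_pow]
  have : (0:ℝ) ≤ |bcoe α n| * |x| ^ n := by positivity
  nlinarith [Nat.cast_nonneg (α := ℝ) n]

/-- The binomial series function. -/
noncomputable def binomF (α : ℝ) (y : ℝ) : ℝ := ∑' n : ℕ, bcoe α n * y ^ n

lemma summable_bcoe_deriv (α : ℝ) {t : ℝ} (ht0 : 0 < t) (ht : t < 1) :
    Summable (fun n : ℕ => |bcoe α n| * ((n:ℝ) * t ^ (n - 1))) := by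
  have ht' : |t| < 1 := by rwa [abs_of_pos ht0]
  refine Summable.of_nonneg_of_le (fun n => by positivity)
    (fun n => ?_) (((summable_bcoe_aux α ht').mul_left (1/t)))
  rw [abs_of_pos ht0]
  rcases Nat.eq_zero_or_pos n with h | h
  · subst h; simp; positivity
  · have h1 : t ^ (n - 1) = t ^ n / t := by
      rw [eq_div_iff ht0.ne', ← pow_succ, Nat.sub_add_cancel h]
    rw [h1]
    rw [div_eq_mul_one_div, ← mul_assoc]
    calc |bcoe α n| * ↑n * (t ^ n * (1/t))
        = ((n:ℝ) * |bcoe α n| * t ^ n) * (1/t) := by ring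
      _ ≤ (((n:ℝ)+1) * |bcoe α n| * t ^ n) * (1/t) := by
          have h9 : (0:ℝ) ≤ 1/t := by positivity
          nlinarith [mul_nonneg (mul_nonneg (abs_nonneg (bcoe α n))
            (pow_nonneg ht0.le n)) h9]
      _ = 1/t * (((n:ℝ)+1) * |bcoe α n| * t ^ n) := by ring

lemma hasDerivAt_binomF (α : ℝ) {y : ℝ} (hy : |y| < 1) :
    HasDerivAt (binomF α) (∑' n : ℕ, bcoe α n * ((n:ℝ) * y ^ (n - 1))) y := by
  set t : ℝ := (1 + |y|) / 2 with htdef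
  have hy0 : 0 ≤ |y| := abs_nonneg y
  have ht0 : 0 < t := by rw [htdef]; linarith
  have ht1 : t < 1 := by rw [htdef]; linarith
  have hyt : |y| < t := by rw [htdef]; linarith
  have hmem : y ∈ Metric.ball (0:ℝ) t := by
    rw [Metric.mem_ball, dist_zero_right, Real.norm_eq_abs]; exact hyt
  exact hasDerivAt_tsum_of_isPreconnected (summable_bcoe_deriv α ht0 ht1)
    Metric.isOpen_ball (convex_ball (0:ℝ) t).isPreconnected
    (fun n z _ => (hasDerivAt_pow n z).const_mul (bcoe α n))
    (fun n z hz => by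
      rw [Metric.mem_ball, dist_zero_right, Real.norm_eq_abs] at hz
      rw [Real.norm_eq_abs, abs_mul, abs_mul, abs_pow]
      rw [abs_of_nonneg (Nat.cast_nonneg (α := ℝ) n)]
      have h10 : |z| ^ (n-1) ≤ t ^ (n-1) := pow_le_pow_left₀ (abs_nonneg z) hz.le _
      exact mul_le_mul_of_nonneg_left
        (mul_le_mul_of_nonneg_left h10 (Nat.cast_nonneg (α := ℝ) n))
        (abs_nonneg (bcoe α n)))
    hmem
    (summable_bcoe α (by rwa [Metric.mem_ball, dist_zero_right, Real.norm_eq_abs] at hmem; ))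
    hmem

lemma summable_bcoe_deriv_at (α : ℝ) {y : ℝ} (hy : |y| < 1) :
    Summable (fun n : ℕ => bcoe α n * ((n:ℝ) * y ^ (n - 1))) := by
  set t : ℝ := (1 + |y|) / 2 with htdef
  have hy0 : 0 ≤ |y| := abs_nonneg y
  have ht0 : 0 < t := by rw [htdef]; linarith
  have ht1 : t < 1 := by rw [htdef]; linarith
  have hyt : |y| < t := by rw [htdef]; linarith
  refine Summable.of_norm_bounded (summable_bcoe_deriv α ht0 ht1) (fun n => ?_)
  rw [Real.norm_eq_abs, abs_mul, abs_mul, abs_pow,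
    abs_of_nonneg (Nat.cast_nonneg (α := ℝ) n)]
  exact mul_le_mul_of_nonneg_left
    (mul_le_mul_of_nonneg_left (pow_le_pow_left₀ (abs_nonneg y) hyt.le _)
      (Nat.cast_nonneg (α := ℝ) n))
    (abs_nonneg (bcoe α n))

lemma summable_bcoe_nmul (α : ℝ) {y : ℝ} (hy : |y| < 1) :
    Summable (fun n : ℕ => bcoe α n * ((n:ℝ) * y ^ n)) := by
  refine Summable.of_norm_bounded (summable_bcoe_aux α hy) (fun n => ?_)
  rw [Real.norm_eq_abs, abs_mul, abs_mul, abs_pow,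
    abs_of_nonneg (Nat.cast_nonneg (α := ℝ) n)]
  have h1 : (0:ℝ) ≤ |bcoe α n| * |y| ^ n := by positivity
  calc |bcoe α n| * ((n:ℝ) * |y| ^ n) = (n:ℝ) * (|bcoe α n| * |y| ^ n) := by ring
    _ ≤ ((n:ℝ) + 1) * (|bcoe α n| * |y| ^ n) := by nlinarith
    _ = ((n:ℝ) + 1) * |bcoe α n| * |y| ^ n := by ring

lemma binomF_funcEq (α : ℝ) {y : ℝ} (hy : |y| < 1) :
    (1 + y) * (∑' n : ℕ, bcoe α n * ((n:ℝ) * y ^ (n - 1))) = α * binomF α y := by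
  set G : ℝ := ∑' n : ℕ, bcoe α n * ((n:ℝ) * y ^ (n - 1)) with hGdef
  have SG : Summable (fun n : ℕ => bcoe α n * ((n:ℝ) * y ^ (n - 1))) :=
    summable_bcoe_deriv_at α hy
  have SF : Summable (fun n : ℕ => bcoe α n * y ^ n) := summable_bcoe α hy
  have SN : Summable (fun n : ℕ => bcoe α n * ((n:ℝ) * y ^ n)) :=
    summable_bcoe_nmul α hy
  -- step A: reindex
  have hA : G = ∑' n : ℕ, bcoe α (n+1) * (((n:ℝ)+1) * y ^ n) := by
    rw [hGdef, Summable.tsum_eq_zero_add SG]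
    simp only [Nat.cast_zero, zero_mul, mul_zero, zero_add, Nat.cast_succ,
      Nat.add_sub_cancel]
  -- step B: pointwise recurrence
  have hB : ∀ n : ℕ, bcoe α (n+1) * (((n:ℝ)+1) * y ^ n)
      = α * (bcoe α n * y ^ n) - bcoe α n * ((n:ℝ) * y ^ n) := by
    intro n
    rw [bcoe_succ]
    have hne : ((n:ℝ) + 1) ≠ 0 := by positivity
    field_simp
  have hC : G = α * binomF α y - ∑' n : ℕ, bcoe α n * ((n:ℝ) * y ^ n) := by
    rw [hA]
    simp_rw [hB]
    rw [Summable.tsum_sub (SF.mul_left α) SN, tsum_mul_left]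
    rfl
  -- step D
  have hD : ∑' n : ℕ, bcoe α n * ((n:ℝ) * y ^ n) = y * G := by
    rw [hGdef, ← tsum_mul_left]
    congr 1
    funext n
    cases n with
    | zero => simp
    | succ m => push_cast [Nat.add_sub_cancel]; rw [pow_succ]; ring
  rw [hD] at hC
  linarith [hC]

lemma binomF_zero (α : ℝ) : binomF α 0 = 1 := by
  rw [binomF, tsum_eq_single 0 (fun n hn => by simp [zero_pow hn])]
  simp [bcoe_zero]

theorem binomF_eq (α : ℝ) {x : ℝ} (hx : |x| < 1) : binomF α x = (1 + x) ^ α := by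
  set H : ℝ → ℝ := fun y => binomF α y * (1 + y) ^ (-α) with hHdef
  have hDeriv : ∀ y ∈ Set.Ioo (-1:ℝ) 1, HasDerivAt H 0 y := by
    intro y hy
    obtain ⟨hy1, hy2⟩ := hy
    have hy' : |y| < 1 := abs_lt.mpr ⟨hy1, hy2⟩
    have hpos : (0:ℝ) < 1 + y := by linarith
    set G : ℝ := ∑' n : ℕ, bcoe α n * ((n:ℝ) * y ^ (n - 1)) with hGdef
    have hF : HasDerivAt (binomF α) G y := hasDerivAt_binomF α hy'
    have hP : HasDerivAt (fun z : ℝ => (1 + z) ^ (-α)) (-α * (1 + y) ^ (-α - 1)) y := by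
      have h1 : HasDerivAt (fun z : ℝ => z ^ (-α)) (-α * (1 + y) ^ (-α - 1)) (1 + y) :=
        Real.hasDerivAt_rpow_const (Or.inl hpos.ne')
      have h2 : HasDerivAt (fun z : ℝ => 1 + z) 1 y := (hasDerivAt_id y).const_add 1
      simpa [Function.comp_def] using h1.comp y h2
    have hmul := hF.mul hP
    have hkey : (1 + y) * G = α * binomF α y := binomF_funcEq α hy'
    have hsplit : (1 + y) ^ (-α) = (1 + y) * (1 + y) ^ (-α - 1) := by
      calc (1 + y) ^ (-α) = (1 + y) ^ ((1:ℝ) + (-α - 1)) := by norm_num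
        _ = (1 + y) ^ (1:ℝ) * (1 + y) ^ (-α - 1) := Real.rpow_add hpos 1 (-α - 1)
        _ = (1 + y) * (1 + y) ^ (-α - 1) := by rw [Real.rpow_one]
    have : G * (1 + y) ^ (-α) + binomF α y * (-α * (1 + y) ^ (-α - 1)) = 0 := by
      rw [hsplit]
      have : G * ((1 + y) * (1 + y) ^ (-α - 1)) = ((1+y) * G) * (1 + y) ^ (-α - 1) := by
        ring
      rw [this, hkey]
      ring
    rw [hHdef]
    simpa only [this, Pi.mul_def] using hmul
  have hconst : H x = H 0 := by
    refine Convex.is_const_of_fderivWithin_eq_zero (convex_Ioo (-1:ℝ) 1)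
      (fun y hy => (hDeriv y hy).differentiableAt.differentiableWithinAt)
      (fun y hy => ?_) (abs_lt.mp hx |> fun h => ⟨h.1, h.2⟩) ?_
    · have h := (hDeriv y hy).hasFDerivAt
      have h0 : ContinuousLinearMap.toSpanSingleton ℝ (0:ℝ) = 0 := by
        ext z; simp
      rw [h0] at h
      exact h.hasFDerivWithinAt.fderivWithin (isOpen_Ioo.uniqueDiffWithinAt hy)
    · constructor <;> norm_num
  have hH0 : H 0 = 1 := by
    rw [hHdef]; simp [binomF_zero, Real.one_rpow]
  have hpos : (0:ℝ) < 1 + x := by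
    have := (abs_lt.mp hx).1; linarith
  have hne : (1 + x) ^ α ≠ 0 := (Real.rpow_pos_of_pos hpos α).ne'
  have := hconst.trans hH0
  rw [hHdef] at this
  simp only at this
  rw [Real.rpow_neg hpos.le, ← div_eq_mul_inv, div_eq_one_iff_eq hne] at this
  exact this

theorem hasSum_binom (α : ℝ) {x : ℝ} (hx : |x| < 1) :
    HasSum (fun n : ℕ => bcoe α n * x ^ n) ((1 + x) ^ α) := by
  rw [(summable_bcoe α hx).hasSum_iff]
  exact binomF_eq α hx

open Polynomial in
lemma moments_zero (a b C : ℝ) (ha : 0 < a) (hab : a < b) (f : ℝ → ℝ)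
    (hfc : Continuous f) (hsupp : tsupport f ⊆ Set.Ioo a b)
    (hC : ∀ x, ‖f x‖ ≤ C)
    (hM : ∀ n : ℕ, ∫ r in Set.Ioc a b, f r * ((r ^ 2)⁻¹) ^ n = 0) :
    f = 0 := by
  have hC0 : 0 ≤ C := le_trans (norm_nonneg _) (hC 0)
  have hvol : volume (Set.Ioc a b) < ⊤ := measure_Ioc_lt_top
  have hvolR : (volume (Set.Ioc a b)).toReal = b - a := by
    rw [Real.volume_Ioc, ENNReal.toReal_ofReal (by linarith)]
  -- integrability of f * (polynomial in (r²)⁻¹)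
  have hcontOn : ∀ q : ℝ[X], ContinuousOn
      (fun r : ℝ => f r * Polynomial.eval ((r ^ 2)⁻¹) q) (Set.Icc a b) := by
    intro q
    apply hfc.continuousOn.mul
    apply (q.continuous).comp_continuousOn
    apply ContinuousOn.inv₀ (continuousOn_pow 2)
    intro x hx
    have : 0 < x := lt_of_lt_of_le ha hx.1
    positivity
  have hintg : ∀ q : ℝ[X], IntegrableOn
      (fun r : ℝ => f r * Polynomial.eval ((r ^ 2)⁻¹) q) (Set.Ioc a b) := fun q =>
    ((hcontOn q).integrableOn_Icc).mono_set Set.Ioc_subset_Icc_self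
  -- all polynomial moments vanish
  have hpoly : ∀ q : ℝ[X],
      ∫ r in Set.Ioc a b, f r * Polynomial.eval ((r ^ 2)⁻¹) q = 0 := by
    intro q
    induction q using Polynomial.induction_on' with
    | add p q hp hq =>
        simp only [Polynomial.eval_add, mul_add]
        rw [integral_add (hintg p) (hintg q), hp, hq, add_zero]
    | monomial n c =>
        simp only [Polynomial.eval_monomial]
        have : ∀ r : ℝ, f r * (c * ((r ^ 2)⁻¹) ^ n) = c * (f r * ((r ^ 2)⁻¹) ^ n) := by
          intro r; ring
        simp_rw [this]
        rw [integral_const_mul, hM n, mul_zero]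
  -- Stone–Weierstrass setup
  haveI : CompactSpace (Set.Icc a b) := isCompact_iff_compactSpace.mp isCompact_Icc
  set w : C(Set.Icc a b, ℝ) := ⟨fun x => ((x : ℝ) ^ 2)⁻¹, by
    apply Continuous.inv₀ ((continuous_subtype_val.pow 2))
    intro x
    have : 0 < (x:ℝ) := lt_of_lt_of_le ha x.2.1
    exact pow_ne_zero 2 this.ne'⟩ with hwdef
  set A : Subalgebra ℝ C(Set.Icc a b, ℝ) := Algebra.adjoin ℝ {w} with hAdef
  have hsep : A.SeparatesPoints := by
    intro x y hxy
    refine ⟨w, ⟨w, Algebra.subset_adjoin rfl, rfl⟩, ?_⟩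
    simp only [hwdef, ContinuousMap.coe_mk]
    intro heq
    have hx0 : 0 < (x:ℝ) := lt_of_lt_of_le ha x.2.1
    have hy0 : 0 < (y:ℝ) := lt_of_lt_of_le ha y.2.1
    have h2 : ((x:ℝ))^2 = ((y:ℝ))^2 := by
      have := inv_inj.mp heq
      linarith [this]
    have : (x:ℝ) = (y:ℝ) := by nlinarith
    exact hxy (Subtype.ext this)
  have hSW : A.topologicalClosure = ⊤ :=
    ContinuousMap.subalgebra_topologicalClosure_eq_top_of_separatesPoints A hsep
  set fX : C(Set.Icc a b, ℝ) := ⟨fun x => f x, hfc.comp continuous_subtype_val⟩ with hfXdef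
  have hmemcl : fX ∈ closure (A : Set C(Set.Icc a b, ℝ)) := by
    have h1 : fX ∈ A.topologicalClosure := by rw [hSW]; trivial
    exact h1
  -- key integral estimate
  set I : ℝ := ∫ r in Set.Ioc a b, f r * f r with hIdef
  have hIle : ∀ ε : ℝ, 0 < ε → |I| ≤ C * ε * (b - a) := by
    intro ε hε
    obtain ⟨g, hgA, hgd⟩ := Metric.mem_closure_iff.mp hmemcl ε hε
    rw [hAdef, Algebra.adjoin_singleton_eq_range_aeval] at hgA
    obtain ⟨q, hq⟩ := hgA
    have hptw : ∀ r, r ∈ Set.Ioc a b → |f r - Polynomial.eval ((r ^ 2)⁻¹) q| ≤ ε := by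
      intro r hr
      have hrI : r ∈ Set.Icc a b := Set.Ioc_subset_Icc_self hr
      set x : Set.Icc a b := ⟨r, hrI⟩ with hxdef
      have h1 : g x = Polynomial.eval ((r ^ 2)⁻¹) q := by
        rw [← hq]
        exact Polynomial.aeval_continuousMap_apply q w x
      have h2 : dist (fX x) (g x) ≤ dist fX g := ContinuousMap.dist_apply_le_dist x
      rw [Real.dist_eq] at h2
      have : fX x = f r := rfl
      rw [this, h1] at h2
      linarith [hgd]
    have hIeq : I = ∫ r in Set.Ioc a b,
        f r * (f r - Polynomial.eval ((r ^ 2)⁻¹) q) := by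
      have hsplit : ∀ r : ℝ, f r * (f r - Polynomial.eval ((r ^ 2)⁻¹) q)
          = f r * f r - f r * Polynomial.eval ((r ^ 2)⁻¹) q := fun r => by ring
      simp_rw [hsplit]
      have hff : IntegrableOn (fun r : ℝ => f r * f r) (Set.Ioc a b) :=
        (hfc.mul hfc).integrableOn_Ioc
      rw [integral_sub hff (hintg q), hpoly q, sub_zero, hIdef]
    rw [hIeq]
    have hqc : Continuous fun x : ℝ => Polynomial.eval x q := q.continuous
    have hest : ‖∫ r in Set.Ioc a b, f r * (f r - Polynomial.eval ((r ^ 2)⁻¹) q)‖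
        ≤ (C * ε) * (volume (Set.Ioc a b)).toReal := by
      refine norm_setIntegral_le_of_norm_le_const hvol (fun r hr => ?_)
      · rw [Real.norm_eq_abs, abs_mul]
        have h3 := hptw r hr
        have h4 := hC r
        rw [Real.norm_eq_abs] at h4
        have := abs_nonneg (f r)
        nlinarith
    rw [Real.norm_eq_abs, hvolR] at hest
    linarith
  -- conclude I = 0
  have hI0 : I = 0 := by
    by_contra hI
    have habs : 0 < |I| := abs_pos.mpr hI
    set D : ℝ := C * (b - a) with hD
    have hD0 : 0 ≤ D := by
      rw [hD]; have : (0:ℝ) ≤ b - a := by linarith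
      positivity
    have h5 := hIle (|I| / (2 * D + 2)) (by positivity)
    have h6 : C * (|I| / (2 * D + 2)) * (b - a) = D * |I| / (2 * D + 2) := by
      rw [hD]; ring
    rw [h6] at h5
    rw [le_div_iff₀ (by positivity : (0:ℝ) < 2 * D + 2)] at h5
    nlinarith
  -- positivity argument
  funext x
  simp only [Pi.zero_apply]
  by_contra hx
  have hxsupp : x ∈ Function.support f := hx
  have hxI : x ∈ Set.Ioo a b := hsupp (subset_tsupport f hxsupp)
  have hopen : IsOpen (Function.support f ∩ Set.Ioo a b) := by
    have h1 : IsOpen (Function.support f) := by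
      rw [Function.support_eq_preimage]
      exact isOpen_compl_singleton.preimage hfc
    exact h1.inter isOpen_Ioo
  have hne : (Function.support f ∩ Set.Ioo a b).Nonempty := ⟨x, hxsupp, hxI⟩
  have hposmeas : 0 < volume (Function.support f ∩ Set.Ioo a b) :=
    hopen.measure_pos volume hne
  have hff : IntegrableOn (fun r : ℝ => f r * f r) (Set.Ioc a b) :=
    (hfc.mul hfc).integrableOn_Ioc
  have hpos : 0 < ∫ r in Set.Ioc a b, f r * f r := by
    rw [setIntegral_pos_iff_support_of_nonneg_ae
      (Filter.Eventually.of_forall (fun r => mul_self_nonneg (f r))) hff]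
    refine lt_of_lt_of_le hposmeas (measure_mono ?_)
    intro y hy
    refine ⟨?_, Set.Ioo_subset_Ioc_self hy.2⟩
    have : f y ≠ 0 := hy.1
    exact mul_self_ne_zero.mpr this
  rw [← hIdef] at hpos
  rw [hI0] at hpos
  exact lt_irrefl 0 hpos

lemma bcoe_half_ne_zero (k n : ℕ) : bcoe ((2 * (k:ℝ) - 1) / 2) n ≠ 0 := by
  unfold bcoe
  apply div_ne_zero
  · rw [Finset.prod_ne_zero_iff]
    intro j _ h
    have h1 : 2 * (k:ℝ) - 1 = 2 * j := by
      have := sub_eq_zero.mp h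
      field_simp at this
      linarith
    have h2 : 2 * (k:ℝ) = 2 * (j:ℝ) + 1 := by linarith
    have h3 : 2 * k = 2 * j + 1 := by exact_mod_cast h2
    omega
  · exact Nat.cast_ne_zero.mpr n.factorial_ne_zero

theorem density_lemma'
    (a b : ℝ) (ha : 0 < a) (hab : a < b)
    (f : ℝ → ℝ) (hf : ContDiff ℝ (⊤ : ℕ∞) f)
    (hsupp : tsupport f ⊆ Set.Ioo a b) (hcomp : IsCompact (tsupport f))
    (k : ℕ)
    (hint : ∀ s : ℝ, 0 ≤ s → s < a →
      ∫ r in a..b, f r * (1 - s ^ 2 / r ^ 2) ^ ((2 * (k : ℝ) - 1) / 2) = 0) :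
    f = 0 := by
  have hfc : Continuous f := hf.continuous
  have hcs : HasCompactSupport f := hcomp
  obtain ⟨C, hC⟩ := hcs.exists_bound_of_continuous hfc
  have hC0 : 0 ≤ C := le_trans (norm_nonneg _) (hC 0)
  set α : ℝ := (2 * (k:ℝ) - 1) / 2 with hα
  set M : ℕ → ℝ := fun n => ∫ r in Set.Ioc a b, f r * ((r ^ 2)⁻¹) ^ n with hMdef
  have hvol : volume (Set.Ioc a b) < ⊤ := measure_Ioc_lt_top
  have hvolR : (volume (Set.Ioc a b)).toReal = b - a := by
    rw [Real.volume_Ioc, ENNReal.toReal_ofReal (by linarith)]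
  have hbd : ∀ n : ℕ, ∀ r ∈ Set.Ioc a b, ‖f r * ((r ^ 2)⁻¹) ^ n‖ ≤ C * ((a ^ 2)⁻¹) ^ n := by
    intro n r hr
    have hra : a < r := hr.1
    have hrpos : 0 < r := ha.trans hra
    rw [norm_mul]
    have h1 : ‖((r ^ 2)⁻¹) ^ n‖ = ((r ^ 2)⁻¹) ^ n := Real.norm_of_nonneg (by positivity)
    rw [h1]
    have h2 : ((r ^ 2)⁻¹) ^ n ≤ ((a ^ 2)⁻¹) ^ n := by
      apply pow_le_pow_left₀ (by positivity)
      apply inv_anti₀ (by positivity)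
      nlinarith
    have h3 := hC r
    have h4 : (0:ℝ) ≤ ((r ^ 2)⁻¹) ^ n := by positivity
    nlinarith [norm_nonneg (f r)]
  have hmeasn : ∀ n : ℕ, Measurable (fun r : ℝ => f r * ((r ^ 2)⁻¹) ^ n) := fun n =>
    hfc.measurable.mul (((measurable_id.pow_const 2).inv).pow_const n)
  have hMle : ∀ n : ℕ, |M n| ≤ (C * ((a ^ 2)⁻¹) ^ n) * (b - a) := by
    intro n
    have := norm_setIntegral_le_of_norm_le_const hvol (hbd n)
    rwa [Real.norm_eq_abs, measureReal_def, hvolR] at this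
  have hintgn : ∀ n : ℕ, IntegrableOn (fun r : ℝ => f r * ((r ^ 2)⁻¹) ^ n)
      (Set.Ioc a b) := by
    intro n
    refine Integrable.mono'
      ((integrableOn_const hvol.ne :
        IntegrableOn (fun _ : ℝ => C * ((a ^ 2)⁻¹) ^ n) (Set.Ioc a b) volume))
      ((hmeasn n).aestronglyMeasurable) ?_
    filter_upwards [ae_restrict_mem measurableSet_Ioc] with r hr using hbd n r hr
  -- Step 1: the coefficient identity
  have key : ∀ t : ℝ, 0 ≤ t → t < a ^ 2 →
      ∑' n : ℕ, (bcoe α n * (-1) ^ n * M n) * t ^ n = 0 := by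
    intro t ht0 hta
    set s : ℝ := Real.sqrt t with hs
    have hs0 : 0 ≤ s := Real.sqrt_nonneg t
    have hsa : s < a := by
      rw [hs, show a = Real.sqrt (a ^ 2) by rw [Real.sqrt_sq ha.le]]
      exact Real.sqrt_lt_sqrt ht0 hta
    have hs2 : s ^ 2 = t := Real.sq_sqrt ht0
    have h0 : ∫ r in Set.Ioc a b, f r * (1 - s ^ 2 / r ^ 2) ^ α = 0 := by
      rw [← intervalIntegral.integral_of_le hab.le]
      exact hint s hs0 hsa
    set F : ℕ → ℝ → ℝ :=
      fun n r => bcoe α n * (-(s ^ 2)) ^ n * (f r * ((r ^ 2)⁻¹) ^ n) with hF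
    have hpt : ∀ r ∈ Set.Ioc a b,
        f r * (1 - s ^ 2 / r ^ 2) ^ α = ∑' n : ℕ, F n r := by
      intro r hr
      have hra : a < r := hr.1
      have hrpos : 0 < r := ha.trans hra
      set x : ℝ := -(s ^ 2) * (r ^ 2)⁻¹ with hx
      have hs2r : s ^ 2 < r ^ 2 := by nlinarith
      have hx1 : |x| < 1 := by
        rw [hx, abs_mul, abs_neg, abs_of_nonneg (sq_nonneg s),
          abs_of_nonneg (by positivity : (0:ℝ) ≤ (r ^ 2)⁻¹)]
        calc s ^ 2 * (r ^ 2)⁻¹ < r ^ 2 * (r ^ 2)⁻¹ :=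
            mul_lt_mul_of_pos_right hs2r (by positivity)
          _ = 1 := mul_inv_cancel₀ (by positivity)
      have hsum := hasSum_binom α hx1
      have h1x : 1 + x = 1 - s ^ 2 / r ^ 2 := by rw [hx, div_eq_mul_inv]; ring
      rw [h1x] at hsum
      have hsum2 := hsum.mul_left (f r)
      rw [← hsum2.tsum_eq]
      congr 1
      funext n
      rw [hx, mul_pow]
      ring
    have hIoc : ∫ r in Set.Ioc a b, ∑' n : ℕ, F n r = 0 := by
      rw [← h0]
      exact setIntegral_congr_fun measurableSet_Ioc (fun r hr => (hpt r hr).symm)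
    have hFint : ∀ n, IntegrableOn (F n) (Set.Ioc a b) := fun n =>
      (hintgn n).const_mul _
    have hq0 : (0:ℝ) ≤ s ^ 2 * (a ^ 2)⁻¹ := by positivity
    have hq1 : |s ^ 2 * (a ^ 2)⁻¹| < 1 := by
      rw [abs_of_nonneg hq0]
      have hs2a : s ^ 2 < a ^ 2 := by nlinarith
      calc s ^ 2 * (a ^ 2)⁻¹ < a ^ 2 * (a ^ 2)⁻¹ :=
          mul_lt_mul_of_pos_right hs2a (by positivity)
        _ = 1 := mul_inv_cancel₀ (by positivity)
    have hFsum : Summable (fun n : ℕ => ∫ r in Set.Ioc a b, ‖F n r‖) := by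
      refine Summable.of_nonneg_of_le
        (fun n => integral_nonneg fun r => norm_nonneg _) (fun n => ?_)
        ((summable_bcoe_aux α hq1).mul_left (C * (b - a)))
      have hbnd : ∀ r ∈ Set.Ioc a b,
          ‖‖F n r‖‖ ≤ |bcoe α n| * (s ^ 2 * (a ^ 2)⁻¹) ^ n * C := by
        intro r hr
        rw [norm_norm, hF]
        simp only
        rw [norm_mul, norm_mul]
        have e1 : ‖bcoe α n‖ = |bcoe α n| := rfl
        have e2 : ‖(-(s ^ 2)) ^ n‖ = (s ^ 2) ^ n := by
          rw [norm_pow, norm_neg, Real.norm_of_nonneg (sq_nonneg s)]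
        rw [e1, e2]
        have h5 := hbd n r hr
        have h6 : (0:ℝ) ≤ |bcoe α n| := abs_nonneg _
        have h7 : (0:ℝ) ≤ (s ^ 2) ^ n := by positivity
        calc |bcoe α n| * (s ^ 2) ^ n * ‖f r * ((r ^ 2)⁻¹) ^ n‖
            ≤ |bcoe α n| * (s ^ 2) ^ n * (C * ((a ^ 2)⁻¹) ^ n) := by
              apply mul_le_mul_of_nonneg_left h5 (by positivity)
          _ = |bcoe α n| * (s ^ 2 * (a ^ 2)⁻¹) ^ n * C := by
              rw [mul_pow]; ring
      have hnorm_int : ∫ r in Set.Ioc a b, ‖F n r‖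
          = ‖∫ r in Set.Ioc a b, ‖F n r‖‖ :=
        (Real.norm_of_nonneg (integral_nonneg fun r => norm_nonneg _)).symm
      rw [hnorm_int]
      have h8 := norm_setIntegral_le_of_norm_le_const hvol hbnd
      rw [measureReal_def, hvolR] at h8
      refine le_trans h8 ?_
      rw [abs_of_nonneg hq0]
      have h9 : (0:ℝ) ≤ |bcoe α n| * (s ^ 2 * (a ^ 2)⁻¹) ^ n := by positivity
      have h10 : (0:ℝ) ≤ b - a := by linarith
      nlinarith [mul_nonneg (mul_nonneg h9 hC0) h10]
    have hswap := integral_tsum_of_summable_integral_norm hFint hFsum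
    have hzero : ∑' n : ℕ, ∫ r in Set.Ioc a b, F n r = 0 := by
      rw [hswap, hIoc]
    have hFn : ∀ n : ℕ, ∫ r in Set.Ioc a b, F n r
        = (bcoe α n * (-1) ^ n * M n) * t ^ n := by
      intro n
      rw [hF]
      simp only
      rw [integral_const_mul]
      rw [neg_pow, ← hs2, hMdef]
      ring
    rw [← hzero]
    exact tsum_congr fun n => (hFn n).symm
  -- Step 2: power series coefficients vanish
  set d : ℕ → ℝ := fun n => bcoe α n * (-1) ^ n * M n with hd
  set p : FormalMultilinearSeries ℝ ℝ ℝ :=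
    fun n => ContinuousMultilinearMap.mkPiRing ℝ (Fin n) (d n) with hp
  have hpnorm : ∀ n, ‖p n‖ = |d n| := fun n =>
    ContinuousMultilinearMap.norm_mkPiRing (d n)
  set ρ : ℝ≥0 := Real.toNNReal (a ^ 2 / 2) with hρ
  have hρR : (ρ : ℝ) = a ^ 2 / 2 := Real.coe_toNNReal _ (by positivity)
  have hhalf : |(1:ℝ)/2| < 1 := by rw [abs_of_nonneg]; norm_num; norm_num
  have hsum : Summable (fun n : ℕ => ‖p n‖ * (ρ:ℝ) ^ n) := by
    refine Summable.of_nonneg_of_le (fun n => by positivity) (fun n => ?_)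
      ((summable_bcoe_aux α hhalf).mul_left (C * (b - a)))
    rw [hpnorm, hρR, hd]
    simp only
    rw [abs_mul, abs_mul, abs_pow, abs_neg, abs_one, one_pow, mul_one]
    have h1 := hMle n
    have h2 : |bcoe α n| * |M n| * (a ^ 2 / 2) ^ n
        ≤ |bcoe α n| * ((C * ((a ^ 2)⁻¹) ^ n) * (b - a)) * (a ^ 2 / 2) ^ n := by
      have : (0:ℝ) ≤ (a ^ 2 / 2) ^ n := by positivity
      have hb0 := abs_nonneg (bcoe α n)
      nlinarith [mul_nonneg hb0 this]
    refine le_trans h2 ?_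
    have h3 : ((a ^ 2)⁻¹) ^ n * (a ^ 2 / 2) ^ n = (1/2 : ℝ) ^ n := by
      rw [← mul_pow]
      congr 1
      field_simp
    have h4 : |bcoe α n| * ((C * ((a ^ 2)⁻¹) ^ n) * (b - a)) * (a ^ 2 / 2) ^ n
        = C * (b - a) * (|bcoe α n| * (((a ^ 2)⁻¹) ^ n * (a ^ 2 / 2) ^ n)) := by
      ring
    rw [h4, h3, show |(1:ℝ)/2| = (1/2:ℝ) from by norm_num]
    have h5 : |bcoe α n| * (1/2:ℝ) ^ n ≤ ((n:ℝ)+1) * |bcoe α n| * (1/2:ℝ) ^ n := by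
      have : (0:ℝ) ≤ |bcoe α n| * (1/2:ℝ)^n := by positivity
      nlinarith [Nat.cast_nonneg (α := ℝ) n]
    have h6 : (0:ℝ) ≤ C * (b - a) := by
      have : (0:ℝ) ≤ b - a := by linarith
      positivity
    exact mul_le_mul_of_nonneg_left h5 h6
  have hrad : (ρ : ℝ≥0∞) ≤ p.radius := p.le_radius_of_summable_norm hsum
  have hρ0 : (0:ℝ≥0∞) < ρ := by
    rw [ENNReal.coe_pos]
    exact Real.toNNReal_pos.mpr (by positivity)
  have hball := p.hasFPowerSeriesOnBall (lt_of_lt_of_le hρ0 hrad)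
  have hmemball : ∀ t : ℝ, |t| < a ^ 2 / 2 → t ∈ Metric.eball (0:ℝ) p.radius := by
    intro t ht
    rw [Metric.mem_eball, edist_dist, Real.dist_eq, sub_zero]
    refine lt_of_lt_of_le ?_ hrad
    have h1 : ENNReal.ofReal |t| < ENNReal.ofReal (a ^ 2 / 2) :=
      (ENNReal.ofReal_lt_ofReal_iff (by positivity)).mpr ht
    exact h1
  have hpapp : ∀ (n : ℕ) (t : ℝ), (p n fun _ => t) = d n * t ^ n := by
    intro n t
    rw [hp]
    simp only
    rw [ContinuousMultilinearMap.mkPiRing_apply, Finset.prod_const, Finset.card_univ,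
      Fintype.card_fin, smul_eq_mul]
    ring
  have hGzero : ∀ t ∈ Set.Ioo (0:ℝ) (a ^ 2 / 2), p.sum t = 0 := by
    intro t ht
    have habs : |t| < a ^ 2 / 2 := by
      rw [abs_of_pos ht.1]; exact ht.2
    have h1 : HasSum (fun n => p n fun _ => t) (p.sum t) := p.hasSum (hmemball t habs)
    simp_rw [hpapp] at h1
    have h2 : ∑' n : ℕ, d n * t ^ n = 0 := by
      rw [hd]
      exact key t ht.1.le (by nlinarith [ht.2, sq_nonneg a, ha])
    rw [← h1.tsum_eq]
    exact h2
  have hAnal : AnalyticOnNhd ℝ p.sum (Metric.ball (0:ℝ) (a ^ 2 / 2)) := by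
    intro t ht
    rw [Metric.mem_ball, Real.dist_eq, sub_zero] at ht
    exact hball.analyticAt_of_mem (hmemball t ht)
  have hmem₀ : (a ^ 2 / 4) ∈ Metric.ball (0:ℝ) (a ^ 2 / 2) := by
    rw [Metric.mem_ball, Real.dist_eq, sub_zero, abs_of_pos (by positivity)]
    nlinarith [sq_nonneg a, ha]
  have hEq : Set.EqOn p.sum 0 (Metric.ball (0:ℝ) (a ^ 2 / 2)) := by
    refine hAnal.eqOn_zero_of_preconnected_of_eventuallyEq_zero
      ((convex_ball _ _).isPreconnected) hmem₀ ?_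
    have hmemnhds : Set.Ioo (0:ℝ) (a ^ 2 / 2) ∈ nhds (a ^ 2 / 4) :=
      isOpen_Ioo.mem_nhds ⟨by positivity, by nlinarith [ha]⟩
    exact Filter.eventuallyEq_of_mem hmemnhds hGzero
  have hev0 : p.sum =ᶠ[nhds (0:ℝ)] 0 :=
    Filter.eventuallyEq_of_mem (Metric.ball_mem_nhds (0:ℝ) (by positivity)) hEq
  have hAt : HasFPowerSeriesAt 0 p 0 := (hball.hasFPowerSeriesAt).congr hev0
  have hdz : ∀ n, d n = 0 := by
    intro n
    have h1 := hAt.apply_eq_zero n 1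
    rw [hpapp n 1] at h1
    simpa using h1
  have hMz : ∀ n, M n = 0 := by
    intro n
    have h1 := hdz n
    rw [hd] at h1
    simp only at h1
    have hb : bcoe α n ≠ 0 := bcoe_half_ne_zero k n
    have hneg : ((-1:ℝ)) ^ n ≠ 0 := pow_ne_zero n (by norm_num)
    rcases mul_eq_zero.mp h1 with h2 | h2
    · rcases mul_eq_zero.mp h2 with h3 | h3
      · exact absurd h3 hb
      · exact absurd h3 hneg
    · exact h2
  exact moments_zero a b C ha hab f hfc hsupp hC hMz

/-- **A density lemma.** Let `0 < a < b` and let `f : ℝ → ℝ` be smooth with support a compact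
subset of `(a, b)`. If for some nonnegative integer `k`,
`∫_a^b f(r) (1 - s²/r²)^{(2k-1)/2} dr = 0` for all `s ∈ [0, a)`, then `f ≡ 0`. -/
theorem density_lemma
    (a b : ℝ) (ha : 0 < a) (hab : a < b)
    (f : ℝ → ℝ) (hf : ContDiff ℝ (⊤ : ℕ∞) f)
    (hsupp : tsupport f ⊆ Set.Ioo a b) (hcomp : IsCompact (tsupport f))
    (k : ℕ)
    (hint : ∀ s : ℝ, 0 ≤ s → s < a →
      ∫ r in a..b, f r * (1 - s ^ 2 / r ^ 2) ^ ((2 * (k : ℝ) - 1) / 2) = 0) :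
    f = 0 :=
  density_lemma' a b ha hab f hf hsupp hcomp k hint
end

section
/- Let n ≥ 1 and let u : ℝⁿ → ℝ be a smooth compactly supported function that is not identically zero. Then for every integer k ≥ 0, the iterated Laplacian Δ^k u is not identically zero (i.e., u is not polyharmonic of any order). -/
open MeasureTheory

/-- The Laplacian `Δ g = Σᵢ ∂²g/∂xᵢ²` of a function `g : ℝⁿ → ℝ`. -/
noncomputable def laplacian' (n : ℕ) (g : EuclideanSpace ℝ (Fin n) → ℝ) :
    EuclideanSpace ℝ (Fin n) → ℝ :=
  fun x => ∑ i : Fin n,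
    fderiv ℝ (fun y => fderiv ℝ g y (EuclideanSpace.single i 1)) x (EuclideanSpace.single i 1)

section aux

variable {n : ℕ}

local notation "E" => EuclideanSpace ℝ (Fin n)

lemma dsmooth {g : E → ℝ} (hg : ContDiff ℝ (⊤ : ℕ∞) g) (v : E) :
    ContDiff ℝ (⊤ : ℕ∞) (fun x => fderiv ℝ g x v) :=
  (hg.fderiv_right (m := (⊤:ℕ∞)) (by exact_mod_cast le_top)).clm_apply contDiff_const

lemma dcs {g : E → ℝ} (hg : HasCompactSupport g) (v : E) :
    HasCompactSupport (fun x => fderiv ℝ g x v) :=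
  hg.fderiv_apply ℝ v

lemma lap_smooth {g : E → ℝ} (hg : ContDiff ℝ (⊤ : ℕ∞) g) :
    ContDiff ℝ (⊤ : ℕ∞) (laplacian' n g) := by
  apply ContDiff.sum
  intro i _
  exact dsmooth (dsmooth hg _) _

lemma lap_cs {g : E → ℝ} (hg : HasCompactSupport g) :
    HasCompactSupport (laplacian' n g) := by
  have : laplacian' n g = ∑ i : Fin n, (fun x =>
      fderiv ℝ (fun y => fderiv ℝ g y (EuclideanSpace.single i 1)) x
        (EuclideanSpace.single i 1)) := by
    funext x; simp [laplacian']
  rw [this]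
  classical
  refine Finset.sum_induction _ HasCompactSupport
    (fun a b ha hb => ha.add hb) HasCompactSupport.zero ?_
  intro i _
  exact dcs (dcs hg _) _

/-- A compactly supported smooth harmonic function is zero. -/
lemma harmonic_eq_zero (hn : 1 ≤ n) {g : E → ℝ} (hg : ContDiff ℝ (⊤ : ℕ∞) g)
    (hgc : HasCompactSupport g) (h : laplacian' n g = 0) : g = 0 := by
  -- ∫ g * Δ g = - Σ ∫ (∂ᵢ g)²
  have key : ∀ i : Fin n, (fun x => fderiv ℝ g x (EuclideanSpace.single i 1)) = 0 := by
    have h0 : (∫ x, g x * laplacian' n g x) = 0 := by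
      simp [h]
    have hsum : (∫ x, g x * laplacian' n g x)
        = ∑ i : Fin n, ∫ x, g x *
          fderiv ℝ (fun y => fderiv ℝ g y (EuclideanSpace.single i 1)) x
            (EuclideanSpace.single i 1) := by
      rw [← integral_finset_sum]
      · congr 1; funext x; rw [laplacian', Finset.mul_sum]
      · intro i _
        apply Continuous.integrable_of_hasCompactSupport
        · exact (hg.continuous.mul (dsmooth (dsmooth hg _) _).continuous)
        · exact (dcs (dcs hgc _) _).mul_left
    have hterm : ∀ i : Fin n,
        (∫ x, g x * fderiv ℝ (fun y => fderiv ℝ g y (EuclideanSpace.single i 1)) x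
            (EuclideanSpace.single i 1))
        = - ∫ x, fderiv ℝ g x (EuclideanSpace.single i 1)
              * fderiv ℝ g x (EuclideanSpace.single i 1) := by
      intro i
      apply integral_mul_fderiv_eq_neg_fderiv_mul_of_integrable
      · exact Continuous.integrable_of_hasCompactSupport
          ((dsmooth hg _).continuous.mul (dsmooth hg _).continuous)
          ((dcs hgc _).mul_left)
      · exact Continuous.integrable_of_hasCompactSupport
          (hg.continuous.mul (dsmooth (dsmooth hg _) _).continuous)
          ((dcs (dcs hgc _) _).mul_left)
      · exact Continuous.integrable_of_hasCompactSupport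
          (hg.continuous.mul (dsmooth hg _).continuous)
          ((dcs hgc _).mul_left)
      · exact fun x _ => hg.differentiable (by simp) x
      · exact fun x _ => (dsmooth hg _).differentiable (by simp) x
    -- so Σᵢ ∫ (∂ᵢ g)² = 0
    have hsq : ∑ i : Fin n,
        (∫ x, fderiv ℝ g x (EuclideanSpace.single i 1)
            * fderiv ℝ g x (EuclideanSpace.single i 1)) = 0 := by
      have := h0
      rw [hsum] at this
      simp only [hterm] at this
      rw [Finset.sum_neg_distrib] at this
      linarith [this]
    intro i
    have hnn : 0 ≤ fun x => fderiv ℝ g x (EuclideanSpace.single i 1)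
        * fderiv ℝ g x (EuclideanSpace.single i 1) := fun x => mul_self_nonneg _
    have hint : Integrable (fun x => fderiv ℝ g x (EuclideanSpace.single i 1)
        * fderiv ℝ g x (EuclideanSpace.single i 1)) volume :=
      Continuous.integrable_of_hasCompactSupport
        ((dsmooth hg _).continuous.mul (dsmooth hg _).continuous)
        ((dcs hgc _).mul_left)
    have hzero : (∫ x, fderiv ℝ g x (EuclideanSpace.single i 1)
        * fderiv ℝ g x (EuclideanSpace.single i 1)) = 0 := by
      have hle : ∀ j ∈ Finset.univ, (0:ℝ) ≤
          ∫ x, fderiv ℝ g x (EuclideanSpace.single j 1)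
            * fderiv ℝ g x (EuclideanSpace.single j 1) := by
        intro j _
        exact integral_nonneg fun x => mul_self_nonneg _
      exact (Finset.sum_eq_zero_iff_of_nonneg hle).1 hsq i (Finset.mem_univ i)
    have hae := (integral_eq_zero_iff_of_nonneg hnn hint).1 hzero
    have heq : (fun x => fderiv ℝ g x (EuclideanSpace.single i 1)
        * fderiv ℝ g x (EuclideanSpace.single i 1)) = 0 := by
      refine (Continuous.ae_eq_iff_eq volume
        ((dsmooth hg _).continuous.mul (dsmooth hg _).continuous) continuous_const).1 hae
    funext x
    have := congrFun heq x
    simp only [Pi.zero_apply] at this ⊢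
    exact mul_self_eq_zero.1 this
  -- hence fderiv g = 0 everywhere
  have hfd : ∀ x : E, fderiv ℝ g x = 0 := by
    intro x
    apply ContinuousLinearMap.ext
    intro y
    have hy : y = ∑ i : Fin n, y i • EuclideanSpace.single i (1:ℝ) := by
      have := (EuclideanSpace.basisFun (Fin n) ℝ).toBasis.sum_repr y
      simpa [EuclideanSpace.basisFun_apply] using this.symm
    rw [hy]
    rw [map_sum]
    simp only [_root_.map_smul]
    apply Finset.sum_eq_zero
    intro i _
    have := congrFun (key i) x
    simp only [Pi.zero_apply] at this
    simp [this]
  -- so g is constant, and compactly supported, hence 0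
  haveI : Nontrivial E := by
    refine ⟨⟨0, EuclideanSpace.single ⟨0, hn⟩ 1, ?_⟩⟩
    intro hcontra
    have := congrArg (fun f : E => f ⟨0, hn⟩) hcontra
    simp [EuclideanSpace.single_apply] at this
  obtain ⟨x₀, hx₀⟩ : ∃ x : E, x ∉ tsupport g := by
    by_contra hcon
    push_neg at hcon
    have huniv : tsupport g = Set.univ := Set.eq_univ_of_forall hcon
    exact noncompact_univ E (huniv ▸ hgc)
  funext y
  have := is_const_of_fderiv_eq_zero (𝕜 := ℝ) (hg.differentiable (by simp)) hfd y x₀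
  rw [this, image_eq_zero_of_notMem_tsupport hx₀]
  rfl

end aux

/-- **No nonzero compactly supported smooth function is polyharmonic.**
If `u : ℝⁿ → ℝ` is smooth, compactly supported and not identically zero, then for every
`k ≥ 0` the iterated Laplacian `Δᵏ u` is not identically zero. -/
theorem iterated_laplacian_ne_zero
    (n : ℕ) (hn : 1 ≤ n) (u : EuclideanSpace ℝ (Fin n) → ℝ)
    (hu : ContDiff ℝ (⊤ : ℕ∞) u) (huc : HasCompactSupport u) (hne : u ≠ 0) :
    ∀ k : ℕ, (laplacian' n)^[k] u ≠ 0 := by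
  have hboth : ∀ k : ℕ, ContDiff ℝ (⊤ : ℕ∞) ((laplacian' n)^[k] u) ∧
      HasCompactSupport ((laplacian' n)^[k] u) := by
    intro k
    induction k with
    | zero => exact ⟨by simpa using hu, by simpa using huc⟩
    | succ k ih =>
      rw [Function.iterate_succ_apply']
      exact ⟨lap_smooth ih.1, lap_cs ih.2⟩
  intro k
  induction k with
  | zero => simpa using hne
  | succ k ih =>
    rw [Function.iterate_succ_apply']
    intro hcontra
    exact ih (harmonic_eq_zero hn (hboth k).1 (hboth k).2 hcontra)
end
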